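/- arXiv:1210.7357 — 10 statements merged into one kernel-verified Lean document; each statement's English description precedes it below -/
import Mathlib

section
/- For every complex number s with Re(s) > 1, the Riemann zeta function satisfies ζ(s) = s·(s+1)/(s−1) · ∫_0^1 ⌊1/x⌋·(x·⌊1/x⌋ + x − 1)·x^{s−1} dx, i.e. ζ(s) equals s(s+1)/(s−1) times the Mellin transform of the harmonic sawtooth map w(x) = ⌊1/x⌋·(x·⌊1/x⌋ + x − 1) on the unit interval. -/
open MeasureTheory Set Filter Complex

namespace SawtoothAux

noncomputable def G (s : ℂ) (x : ℝ) : ℂ :=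
  (⌊1 / x⌋ : ℂ) * ((x : ℂ) * (⌊1 / x⌋ : ℂ) + (x : ℂ) - 1) * (x : ℂ) ^ (s - 1)

noncomputable def P (s : ℂ) (n : ℕ) : ℂ := ((n : ℂ) + 1) ^ (-s)
noncomputable def Q (s : ℂ) (n : ℕ) : ℂ := ((n : ℂ) + 1) ^ (1 - s)
noncomputable def Iw (s : ℂ) (n : ℕ) : ℂ :=
  (s + 1)⁻¹ * P s n - (s * (s + 1))⁻¹ * (Q s n - Q s (n + 1) + P s (n + 1))

lemma measurable_G (s : ℂ) : Measurable (G s) := by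
  have h1 : Measurable fun x : ℝ => (⌊1 / x⌋ : ℂ) :=
    (measurable_from_top.comp ((measurable_const.div measurable_id).floor) :
      Measurable fun x : ℝ => ((⌊1 / x⌋ : ℤ) : ℂ))
  have h2 : Measurable fun x : ℝ => (x : ℂ) ^ (s - 1) := by
    have : (fun x : ℝ => (x : ℂ) ^ (s - 1)) = fun x : ℝ =>
        if x = (0 : ℝ) then (if s - 1 = 0 then 1 else 0)
        else Complex.exp (Complex.log x * (s - 1)) := by
      funext x
      rw [Complex.cpow_def]
      by_cases h : x = 0 <;> simp [h, Complex.ofReal_eq_zero]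
    rw [this]
    exact Measurable.ite measurableSet_eq measurable_const
      (Complex.measurable_exp.comp
        ((Complex.measurable_log.comp Complex.measurable_ofReal).mul_const _))
  have h3 : Measurable fun x : ℝ => (x : ℂ) := Complex.measurable_ofReal
  exact (h1.mul (((h3.mul h1).add h3).sub_const 1)).mul h2

lemma integrableOn_G {s : ℂ} (hs : 1 < s.re) : IntegrableOn (G s) (Ioc (0:ℝ) 1) := by
  have hbound : IntegrableOn (fun x : ℝ => x ^ (s.re - 1)) (Ioc (0:ℝ) 1) :=
    (intervalIntegral.intervalIntegrable_rpow' (by linarith)).1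
  refine Integrable.mono' hbound ((measurable_G s).aestronglyMeasurable) ?_
  filter_upwards [ae_restrict_mem measurableSet_Ioc] with x hx
  have hx0 : 0 < x := hx.1
  have hx1 : x ≤ 1 := hx.2
  set k : ℤ := ⌊1 / x⌋ with hk
  have hkle : (k : ℝ) ≤ 1 / x := Int.floor_le _
  have hklt : 1 / x < (k : ℝ) + 1 := Int.lt_floor_add_one _
  have hk1 : (1 : ℝ) ≤ k := by
    have : (1 : ℤ) ≤ k := Int.le_floor.2 (by simpa using one_le_one_div hx0 hx1)
    exact_mod_cast this
  have hmul1 : (k : ℝ) * x ≤ 1 := (le_div_iff₀ hx0).1 hkle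
  have hmul2 : 1 < ((k : ℝ) + 1) * x := (div_lt_iff₀ hx0).1 hklt
  have hmid0 : 0 ≤ x * (k : ℝ) + x - 1 := by nlinarith
  have hmidx : x * (k : ℝ) + x - 1 ≤ x := by nlinarith
  have hG : G s x = (((k : ℝ) * (x * (k : ℝ) + x - 1) : ℝ) : ℂ) * (x : ℂ) ^ (s - 1) := by
    unfold G
    rw [← hk]
    push_cast
    ring
  have hnorm : ‖G s x‖ = |(k : ℝ) * (x * (k : ℝ) + x - 1)| * x ^ (s.re - 1) := by
    simp only [hG, norm_mul, Complex.norm_real, Real.norm_eq_abs, abs_mul]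
    rw [Complex.norm_cpow_eq_rpow_re_of_pos hx0, Complex.sub_re, Complex.one_re]
  rw [hnorm]
  have habs : |(k : ℝ) * (x * (k : ℝ) + x - 1)| ≤ 1 := by
    rw [_root_.abs_of_nonneg (by nlinarith)]
    calc (k : ℝ) * (x * (k : ℝ) + x - 1) ≤ (1 / x) * x :=
          mul_le_mul hkle hmidx hmid0 (by positivity)
      _ = 1 := by field_simp
  calc |(k : ℝ) * (x * (k : ℝ) + x - 1)| * x ^ (s.re - 1)
      ≤ 1 * x ^ (s.re - 1) := by
        apply mul_le_mul_of_nonneg_right habs (Real.rpow_nonneg hx0.le _)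
    _ = x ^ (s.re - 1) := one_mul _

lemma floor_eq (n : ℕ) {x : ℝ} (hx : x ∈ Ioc ((n : ℝ) + 2)⁻¹ ((n : ℝ) + 1)⁻¹) :
    ⌊1 / x⌋ = (n : ℤ) + 1 := by
  have hn2 : (0 : ℝ) < (n : ℝ) + 2 := by positivity
  have hn1 : (0 : ℝ) < (n : ℝ) + 1 := by positivity
  have hx0 : 0 < x := lt_trans (by positivity) hx.1
  rw [Int.floor_eq_iff]
  constructor
  · push_cast
    rw [le_div_iff₀ hx0]
    calc ((n : ℝ) + 1) * x ≤ ((n : ℝ) + 1) * ((n : ℝ) + 1)⁻¹ :=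
          mul_le_mul_of_nonneg_left hx.2 hn1.le
      _ = 1 := mul_inv_cancel₀ hn1.ne'
  · push_cast
    rw [div_lt_iff₀ hx0]
    calc (1 : ℝ) = ((n : ℝ) + 2) * ((n : ℝ) + 2)⁻¹ := (mul_inv_cancel₀ hn2.ne').symm
      _ < ((n : ℝ) + 2) * x := by
          exact mul_lt_mul_of_pos_left hx.1 hn2
      _ = ((n : ℝ) + 1 + 1) * x := by ring

lemma piece {s : ℂ} (hs : 1 < s.re) (n : ℕ) :
    ∫ x in Ioc ((n : ℝ) + 2)⁻¹ ((n : ℝ) + 1)⁻¹, G s x = Iw s n := by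
  have hs0 : s ≠ 0 := by
    intro h; rw [h] at hs; simp at hs; linarith
  have hs1 : s + 1 ≠ 0 := by
    intro h
    have := congrArg Complex.re h
    simp at this
    linarith
  have hn2 : (0 : ℝ) < (n : ℝ) + 2 := by positivity
  have hn1 : (0 : ℝ) < (n : ℝ) + 1 := by positivity
  have hab : ((n : ℝ) + 2)⁻¹ ≤ ((n : ℝ) + 1)⁻¹ := by
    apply inv_anti₀ hn1; linarith
  -- step 1 : congr to a nice function
  have hcongr : ∫ x in Ioc ((n : ℝ) + 2)⁻¹ ((n : ℝ) + 1)⁻¹, G s x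
      = ∫ x in Ioc ((n : ℝ) + 2)⁻¹ ((n : ℝ) + 1)⁻¹,
          (((n : ℂ) + 1) * ((n : ℂ) + 2) * (x : ℂ) ^ s - ((n : ℂ) + 1) * (x : ℂ) ^ (s - 1)) := by
    apply setIntegral_congr_fun measurableSet_Ioc
    intro x hx
    have hx0 : 0 < x := lt_trans (by positivity) hx.1
    have hxc : (x : ℂ) ≠ 0 := Complex.ofReal_ne_zero.mpr hx0.ne'
    have hfl : ⌊1 / x⌋ = (n : ℤ) + 1 := floor_eq n hx
    have hpow : (x : ℂ) ^ s = (x : ℂ) ^ (s - 1) * (x : ℂ) := by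
      have h := Complex.cpow_add (s - 1) 1 hxc
      rw [sub_add_cancel, Complex.cpow_one] at h
      exact h
    show G s x = ((n : ℂ) + 1) * ((n : ℂ) + 2) * (x : ℂ) ^ s - ((n : ℂ) + 1) * (x : ℂ) ^ (s - 1)
    unfold G
    rw [hfl, hpow]
    push_cast
    ring
  rw [hcongr, ← intervalIntegral.integral_of_le hab]
  have i1 : IntervalIntegrable (fun x : ℝ => (x : ℂ) ^ s) volume
      ((n : ℝ) + 2)⁻¹ ((n : ℝ) + 1)⁻¹ :=
    intervalIntegral.intervalIntegrable_cpow' (by linarith)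
  have i2 : IntervalIntegrable (fun x : ℝ => (x : ℂ) ^ (s - 1)) volume
      ((n : ℝ) + 2)⁻¹ ((n : ℝ) + 1)⁻¹ :=
    intervalIntegral.intervalIntegrable_cpow' (by simp [Complex.sub_re]; linarith)
  rw [intervalIntegral.integral_sub (i1.const_mul _) (i2.const_mul _),
    intervalIntegral.integral_const_mul, intervalIntegral.integral_const_mul,
    integral_cpow (Or.inl (by linarith : (-1:ℝ) < s.re)),
    integral_cpow (Or.inl (by simp [Complex.sub_re]; linarith : (-1:ℝ) < (s-1).re))]
  rw [sub_add_cancel]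
  -- now pure algebra with cpow
  set z : ℂ := (n : ℂ) + 1 with hz_def
  have hzr : z = (((n : ℝ) + 1 : ℝ) : ℂ) := by push_cast; ring
  have hwr : z + 1 = (((n : ℝ) + 2 : ℝ) : ℂ) := by push_cast [hz_def]; ring
  have hz0 : z ≠ 0 := by
    rw [hzr]; exact_mod_cast hn1.ne'
  have hw0 : z + 1 ≠ 0 := by
    rw [hwr]; exact_mod_cast hn2.ne'
  have hargz : z.arg ≠ Real.pi := by
    rw [hzr, Complex.arg_ofReal_of_nonneg hn1.le]
    exact Real.pi_ne_zero.symm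
  have hargw : (z + 1).arg ≠ Real.pi := by
    rw [hwr, Complex.arg_ofReal_of_nonneg hn2.le]
    exact Real.pi_ne_zero.symm
  have hbinv : ((((n : ℝ) + 1)⁻¹ : ℝ) : ℂ) = z⁻¹ := by
    rw [Complex.ofReal_inv, hzr]
  have hainv : ((((n : ℝ) + 2)⁻¹ : ℝ) : ℂ) = (z + 1)⁻¹ := by
    rw [Complex.ofReal_inv, hwr]
  set X : ℂ := z ^ s with hX_def
  set Y : ℂ := (z + 1) ^ s with hY_def
  have hX0 : X ≠ 0 := by
    rw [hX_def, Ne, Complex.cpow_eq_zero_iff]; tauto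
  have hY0 : Y ≠ 0 := by
    rw [hY_def, Ne, Complex.cpow_eq_zero_iff]; tauto
  have hb1 : ((((n : ℝ) + 1)⁻¹ : ℝ) : ℂ) ^ (s + 1) = (X * z)⁻¹ := by
    rw [hbinv, Complex.inv_cpow _ _ hargz, Complex.cpow_add _ _ hz0, Complex.cpow_one]
  have hb2 : ((((n : ℝ) + 1)⁻¹ : ℝ) : ℂ) ^ s = X⁻¹ := by
    rw [hbinv, Complex.inv_cpow _ _ hargz]
  have ha1 : ((((n : ℝ) + 2)⁻¹ : ℝ) : ℂ) ^ (s + 1) = (Y * (z + 1))⁻¹ := by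
    rw [hainv, Complex.inv_cpow _ _ hargw, Complex.cpow_add _ _ hw0, Complex.cpow_one]
  have ha2 : ((((n : ℝ) + 2)⁻¹ : ℝ) : ℂ) ^ s = Y⁻¹ := by
    rw [hainv, Complex.inv_cpow _ _ hargw]
  have hPn : P s n = X⁻¹ := by
    rw [P, Complex.cpow_neg, ← hz_def, ← hX_def]
  have hPn1 : P s (n + 1) = Y⁻¹ := by
    have : ((n + 1 : ℕ) : ℂ) + 1 = z + 1 := by push_cast [hz_def]; ring
    rw [P, this, Complex.cpow_neg, ← hY_def]
  have hQn : Q s n = z * X⁻¹ := by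
    rw [Q, ← hz_def, show (1 : ℂ) - s = 1 + (-s) by ring, Complex.cpow_add _ _ hz0,
      Complex.cpow_one, Complex.cpow_neg, ← hX_def]
  have hQn1 : Q s (n + 1) = (z + 1) * Y⁻¹ := by
    have h' : ((n + 1 : ℕ) : ℂ) + 1 = z + 1 := by push_cast [hz_def]; ring
    rw [Q, h', show (1 : ℂ) - s = 1 + (-s) by ring, Complex.cpow_add _ _ hw0,
      Complex.cpow_one, Complex.cpow_neg, ← hY_def]
  rw [hb1, hb2, ha1, ha2, Iw, hPn, hPn1, hQn, hQn1]
  have h2 : ((n : ℂ) + 2) = z + 1 := by rw [hz_def]; ring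
  rw [h2]
  clear_value z X Y
  field_simp
  ring

lemma partial_sum {s : ℂ} (hs : 1 < s.re) (N : ℕ) :
    ∫ x in Ioc ((N : ℝ) + 1)⁻¹ 1, G s x = ∑ n ∈ Finset.range N, Iw s n := by
  induction N with
  | zero => simp
  | succ N ih =>
    have hN1 : (0 : ℝ) < (N : ℝ) + 1 := by positivity
    have hN2 : (0 : ℝ) < (N : ℝ) + 2 := by positivity
    have hab : ((N : ℝ) + 2)⁻¹ ≤ ((N : ℝ) + 1)⁻¹ := by
      apply inv_anti₀ hN1; linarith
    have hb1 : ((N : ℝ) + 1)⁻¹ ≤ 1 := by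
      rw [inv_le_one_iff₀]; right; linarith
    have hcast : ((N + 1 : ℕ) : ℝ) + 1 = (N : ℝ) + 2 := by push_cast; ring
    have hsplit : Ioc ((N : ℝ) + 2)⁻¹ (1 : ℝ)
        = Ioc ((N : ℝ) + 2)⁻¹ ((N : ℝ) + 1)⁻¹ ∪ Ioc ((N : ℝ) + 1)⁻¹ 1 :=
      (Ioc_union_Ioc_eq_Ioc hab hb1).symm
    rw [hcast, hsplit,
      setIntegral_union (Ioc_disjoint_Ioc_of_le le_rfl) measurableSet_Ioc
        ((integrableOn_G hs).mono_set (Ioc_subset_Ioc (by positivity) hb1))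
        ((integrableOn_G hs).mono_set (Ioc_subset_Ioc (by positivity) le_rfl)),
      piece hs, ih, Finset.sum_range_succ]
    ring

end SawtoothAux

open SawtoothAux

theorem riemannZeta_eq_mellin_harmonic_sawtooth (s : ℂ) (hs : 1 < s.re) :
    riemannZeta s = s * (s + 1) / (s - 1) *
      ∫ x : ℝ in Set.Ioo (0 : ℝ) 1,
        ((⌊1 / x⌋ : ℂ) * ((x : ℂ) * (⌊1 / x⌋ : ℂ) + (x : ℂ) - 1) * (x : ℂ) ^ (s - 1)) := by
  have hs0 : s ≠ 0 := by
    intro h; rw [h] at hs; simp at hs; linarith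
  have hs1 : s + 1 ≠ 0 := by
    intro h
    have := congrArg Complex.re h
    simp at this
    linarith
  have hsm1 : s - 1 ≠ 0 := by
    intro h
    have := congrArg Complex.re h
    simp [Complex.sub_re] at this
    linarith
  -- the integral over Ioo equals integral over Ioc of G s
  have hIoo : (∫ x : ℝ in Set.Ioo (0 : ℝ) 1,
      ((⌊1 / x⌋ : ℂ) * ((x : ℂ) * (⌊1 / x⌋ : ℂ) + (x : ℂ) - 1) * (x : ℂ) ^ (s - 1)))
      = ∫ x in Ioc (0:ℝ) 1, G s x := by
    rw [← integral_Ioc_eq_integral_Ioo]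
    rfl
  -- limit of set integrals
  have hmono : Monotone fun N : ℕ => Ioc ((N : ℝ) + 1)⁻¹ (1 : ℝ) := by
    intro a b hab
    apply Ioc_subset_Ioc_left
    apply inv_anti₀ (by positivity)
    have : (a : ℝ) ≤ b := by exact_mod_cast hab
    linarith
  have hunion : (⋃ N : ℕ, Ioc ((N : ℝ) + 1)⁻¹ (1 : ℝ)) = Ioc (0:ℝ) 1 := by
    ext x
    simp only [mem_iUnion, mem_Ioc]
    constructor
    · rintro ⟨N, h1, h2⟩
      exact ⟨lt_trans (by positivity) h1, h2⟩
    · rintro ⟨hx0, hx1⟩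
      obtain ⟨N, hN⟩ := exists_nat_gt (1 / x)
      refine ⟨N, ?_, hx1⟩
      have h1 : (0:ℝ) < 1 / x := by positivity
      have h2 : 1 / x < (N : ℝ) + 1 := by linarith
      calc ((N : ℝ) + 1)⁻¹ < 1 / (1 / x) := by
            rw [one_div]
            exact inv_strictAnti₀ h1 h2
        _ = x := by field_simp
  have htendA : Tendsto (fun N : ℕ => ∫ x in Ioc ((N : ℝ) + 1)⁻¹ (1:ℝ), G s x) atTop
      (nhds (∫ x in Ioc (0:ℝ) 1, G s x)) := by
    have := tendsto_setIntegral_of_monotone (μ := volume) (f := G s)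
      (s := fun N : ℕ => Ioc ((N : ℝ) + 1)⁻¹ (1 : ℝ))
      (fun _ => measurableSet_Ioc) hmono (by rw [hunion]; exact integrableOn_G hs)
    rwa [hunion] at this
  -- HasSum facts
  have hsummable : Summable (P s) := by
    have h0 : Summable fun n : ℕ => 1 / (n : ℂ) ^ s := Complex.summable_one_div_nat_cpow.mpr hs
    have h1 : Summable fun n : ℕ => 1 / ((n + 1 : ℕ) : ℂ) ^ s :=
      (summable_nat_add_iff (f := fun n : ℕ => 1 / (n : ℂ) ^ s) 1).mpr h0
    refine h1.congr fun n => ?_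
    rw [P, Complex.cpow_neg, one_div]
    norm_cast
  have hPsum : HasSum (P s) (riemannZeta s) := by
    have := hsummable.hasSum
    rwa [show ∑' n, P s n = riemannZeta s from ?_] at this
    rw [zeta_eq_tsum_one_div_nat_add_one_cpow hs]
    apply tsum_congr
    intro n
    rw [P, Complex.cpow_neg, one_div]
  have hP1 : HasSum (fun n => P s (n + 1)) (riemannZeta s - P s 0) := by
    apply (hasSum_nat_add_iff (f := P s) 1).mpr
    simpa using hPsum
  have hP00 : P s 0 = 1 := by simp [P]
  have hQ0 : Q s 0 = 1 := by simp [Q]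
  have hQtend : Tendsto (fun N : ℕ => Q s N) atTop (nhds 0) := by
    rw [tendsto_zero_iff_norm_tendsto_zero]
    have heq : ∀ N : ℕ, ‖Q s N‖ = ((N : ℝ) + 1) ^ ((1:ℝ) - s.re) := by
      intro N
      rw [Q, show ((N : ℂ) + 1) = (((N : ℝ) + 1 : ℝ) : ℂ) by push_cast; ring,
        Complex.norm_cpow_eq_rpow_re_of_pos (by positivity)]
      norm_num [Complex.sub_re]
    simp only [heq]
    have h1 : Tendsto (fun N : ℕ => (N : ℝ) + 1) atTop atTop :=
      tendsto_atTop_add_const_right _ _ tendsto_natCast_atTop_atTop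
    have h2 : Tendsto (fun y : ℝ => y ^ ((1:ℝ) - s.re)) atTop (nhds 0) := by
      have := tendsto_rpow_neg_atTop (y := s.re - 1) (by linarith)
      convert this using 2
      ring
    exact h2.comp h1
  -- partial sums of I
  have hsum_eq : ∀ N : ℕ, ∑ n ∈ Finset.range N, Iw s n
      = (s + 1)⁻¹ * (∑ n ∈ Finset.range N, P s n)
        - (s * (s + 1))⁻¹ * ((Q s 0 - Q s N) + ∑ n ∈ Finset.range N, P s (n + 1)) := by
    intro N
    rw [← Finset.sum_range_sub' (f := Q s) N]
    simp only [Iw, Finset.sum_sub_distrib, Finset.sum_add_distrib, ← Finset.mul_sum]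
  have htendB : Tendsto (fun N : ℕ => ∑ n ∈ Finset.range N, Iw s n) atTop
      (nhds ((s + 1)⁻¹ * riemannZeta s
        - (s * (s + 1))⁻¹ * ((1 - 0) + (riemannZeta s - 1)))) := by
    simp only [hsum_eq, hQ0, ← hP00]
    apply Tendsto.sub
    · exact (hPsum.tendsto_sum_nat).const_mul _
    · apply Tendsto.const_mul
      apply Tendsto.add
      · exact (tendsto_const_nhds.sub hQtend).congr (fun _ => rfl)
      · exact hP1.tendsto_sum_nat
  -- identify the integral
  have key : (∫ x in Ioc (0:ℝ) 1, G s x)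
      = (s + 1)⁻¹ * riemannZeta s
        - (s * (s + 1))⁻¹ * ((1 - 0) + (riemannZeta s - 1)) := by
    apply tendsto_nhds_unique _ htendB
    have := htendA
    simp only [partial_sum hs] at this
    exact this
  rw [hIoo, key]
  have hP00' : (1:ℂ) - 0 + (riemannZeta s - 1) = riemannZeta s := by ring
  field_simp
  ring
end

section
/- For every complex number s with Re(s) > 0 and s ≠ 1, the infinite series Σ_{n=1}^∞ (n·(n+1)^{−s} − n^{1−s} + s·n^{−s}) converges and ζ(s) = (1/(s−1)) · Σ_{n=1}^∞ (n·(n+1)^{−s} − n^{1−s} + s·n^{−s}). -/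
open Filter Finset Complex Set Topology

noncomputable abbrev zTerm (n : ℕ) (z : ℂ) : ℂ :=
  ((n : ℂ) + 1) * ((n : ℂ) + 2) ^ (-z) - ((n : ℂ) + 1) ^ ((1 : ℂ) - z)
    + z * ((n : ℂ) + 1) ^ (-z)

lemma hasDerivAt_cpow_shift (N : ℝ) (hN : 0 < N) (c : ℂ) (x : ℝ) (hx : 0 ≤ x) :
    HasDerivAt (fun y : ℝ => (((N + y : ℝ)) : ℂ) ^ c)
      (c * (((N + x : ℝ)) : ℂ) ^ (c - 1)) x := by
  have h0 : ((N : ℂ) + (x : ℂ)) ∈ Complex.slitPlane := by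
    rw [Complex.mem_slitPlane_iff]
    left
    simp only [Complex.add_re, Complex.ofReal_re]
    linarith
  have h1 : HasDerivAt (fun z : ℂ => ((N : ℂ) + z) ^ c)
      (c * ((N : ℂ) + (x : ℂ)) ^ (c - 1) * 1) ((x : ℝ) : ℂ) :=
    HasDerivAt.cpow_const ((hasDerivAt_id _).const_add _) h0
  have h2 := h1.comp_ofReal
  simpa [Complex.ofReal_add] using h2

lemma zTerm_norm_bound (s : ℂ) (hs : 0 < s.re) (n : ℕ) :
    ‖zTerm n s‖ ≤ ‖s‖ * ‖s + 1‖ * ((n : ℝ) + 1) ^ (-s.re - 1) := by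
  set N : ℝ := (n : ℝ) + 1 with hNdef
  have hN : 0 < N := by positivity
  have hNC : ((N : ℝ) : ℂ) ≠ 0 := by exact_mod_cast hN.ne'
  set C : ℝ := ‖s + 1‖ * N ^ (-s.re - 1) with hCdef
  have hC0 : 0 ≤ C := by positivity
  set χ : ℝ → ℂ := fun x => ((N : ℝ) : ℂ) ^ (-s) - (N : ℂ) * (((N + x : ℝ)) : ℂ) ^ (-s - 1)
    with hχdef
  have hχd : ∀ x ∈ Icc (0:ℝ) 1, HasDerivWithinAt χ
      (-((N : ℂ) * ((-s - 1) * (((N + x : ℝ)) : ℂ) ^ (-s - 1 - 1)))) (Icc (0:ℝ) 1) x := by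
    intro x hx
    exact (((hasDerivAt_const x (((N : ℝ) : ℂ) ^ (-s))).sub
      ((hasDerivAt_cpow_shift N hN (-s - 1) x hx.1).const_mul
        (N : ℂ))).hasDerivWithinAt).congr_deriv (by ring)
  have hχbound : ∀ x ∈ Icc (0:ℝ) 1,
      ‖-((N : ℂ) * ((-s - 1) * (((N + x : ℝ)) : ℂ) ^ (-s - 1 - 1)))‖ ≤ C := by
    intro x hx
    have hx0 := hx.1
    have hNx : 0 < N + x := by linarith
    have hnorm : ‖(((N + x : ℝ)) : ℂ) ^ (-s - 1 - 1)‖ = (N + x) ^ (-s.re - 2) := by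
      rw [Complex.norm_cpow_eq_rpow_re_of_pos hNx]
      congr 1
      simp [Complex.sub_re, Complex.neg_re, Complex.one_re]
      ring
    have hle : (N + x) ^ (-s.re - 2) ≤ N ^ (-s.re - 2) :=
      Real.rpow_le_rpow_of_nonpos hN (by linarith) (by linarith)
    have hs1 : ‖-s - 1‖ = ‖s + 1‖ := by
      rw [show -s - 1 = -(s + 1) by ring, norm_neg]
    rw [norm_neg, norm_mul, norm_mul, hnorm, hs1, Complex.norm_real,
      Real.norm_of_nonneg hN.le]
    calc N * (‖s + 1‖ * (N + x) ^ (-s.re - 2))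
        ≤ N * (‖s + 1‖ * N ^ (-s.re - 2)) := by gcongr
      _ = C := by
          rw [hCdef, show -s.re - 1 = 1 + (-s.re - 2) by ring, Real.rpow_add hN,
            Real.rpow_one]
          ring
  have hχ0 : χ 0 = 0 := by
    have h : ((N : ℝ) : ℂ) ^ (-s) = ((N : ℝ) : ℂ) ^ ((1 : ℂ) + (-s - 1)) := by ring_nf
    rw [hχdef]
    simp only [add_zero]
    rw [h, Complex.cpow_add _ _ hNC, Complex.cpow_one]
    ring
  have hχle : ∀ x ∈ Icc (0:ℝ) 1, ‖χ x‖ ≤ C := by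
    intro x hx
    have h0mem : (0:ℝ) ∈ Icc (0:ℝ) 1 := ⟨le_refl _, zero_le_one⟩
    have h := (convex_Icc (0:ℝ) 1).norm_image_sub_le_of_norm_hasDerivWithin_le
      hχd hχbound h0mem hx
    rw [hχ0, sub_zero] at h
    calc ‖χ x‖ ≤ C * ‖x - 0‖ := h
      _ ≤ C * 1 := by
          apply mul_le_mul_of_nonneg_left _ hC0
          rw [sub_zero, Real.norm_of_nonneg hx.1]
          exact hx.2
      _ = C := mul_one C
  set ψ : ℝ → ℂ := fun x => (N : ℂ) * (((N + x : ℝ)) : ℂ) ^ (-s)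
      + s * (x : ℂ) * ((N : ℝ) : ℂ) ^ (-s) with hψdef
  have hψd : ∀ x ∈ Icc (0:ℝ) 1, HasDerivWithinAt ψ (s * χ x) (Icc (0:ℝ) 1) x := by
    intro x hx
    have part1 := (hasDerivAt_cpow_shift N hN (-s) x hx.1).const_mul (N : ℂ)
    have part2 : HasDerivAt (fun y : ℝ => s * (y : ℂ) * ((N : ℝ) : ℂ) ^ (-s))
        (s * 1 * ((N : ℝ) : ℂ) ^ (-s)) x :=
      (((hasDerivAt_id x).ofReal_comp).const_mul s).mul_const _
    refine ((part1.add part2).hasDerivWithinAt).congr_deriv ?_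
    rw [hχdef]
    ring_nf
  have hψbound : ∀ x ∈ Icc (0:ℝ) 1, ‖s * χ x‖ ≤ ‖s‖ * C := by
    intro x hx
    rw [norm_mul]
    exact mul_le_mul_of_nonneg_left (hχle x hx) (norm_nonneg s)
  have h0mem : (0:ℝ) ∈ Icc (0:ℝ) 1 := ⟨le_refl _, zero_le_one⟩
  have h1mem : (1:ℝ) ∈ Icc (0:ℝ) 1 := ⟨zero_le_one, le_refl _⟩
  have hMVT := (convex_Icc (0:ℝ) 1).norm_image_sub_le_of_norm_hasDerivWithin_le
    hψd hψbound h0mem h1mem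
  have hterm : zTerm n s = ψ 1 - ψ 0 := by
    rw [hψdef]
    simp only [add_zero, Complex.ofReal_zero, mul_zero, zero_mul, Complex.ofReal_one, mul_one]
    have e1 : ((N + 1 : ℝ) : ℂ) = (n : ℂ) + 2 := by rw [hNdef]; push_cast; ring
    have e2 : ((N : ℝ) : ℂ) = (n : ℂ) + 1 := by rw [hNdef]; push_cast; ring
    have e3 : ((n : ℂ) + 1) ^ ((1 : ℂ) - s) = ((n : ℂ) + 1) * ((n : ℂ) + 1) ^ (-s) := by
      rw [show (1 : ℂ) - s = 1 + (-s) by ring, Complex.cpow_add _ _ (e2 ▸ hNC),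
        Complex.cpow_one]
    rw [e1, e2]
    simp only [zTerm]
    rw [e3]
    ring
  rw [hterm]
  calc ‖ψ 1 - ψ 0‖ ≤ ‖s‖ * C * ‖(1:ℝ) - 0‖ := hMVT
    _ = ‖s‖ * ‖s + 1‖ * N ^ (-s.re - 1) := by
        rw [hCdef]
        simp
        ring

lemma rpow_aux_summable (σ : ℝ) (hσ : 0 < σ) (K : ℝ) :
    Summable (fun n : ℕ => K * ((n : ℝ) + 1) ^ (-σ - 1)) := by
  apply Summable.mul_left
  have h : Summable (fun n : ℕ => ((n : ℝ)) ^ (-σ - 1)) :=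
    Real.summable_nat_rpow.2 (by linarith)
  refine ((summable_nat_add_iff 1).2 h).congr fun n => ?_
  push_cast
  ring_nf

lemma zTerm_summable (s : ℂ) (hs : 0 < s.re) : Summable (fun n : ℕ => zTerm n s) :=
  Summable.of_norm_bounded (rpow_aux_summable s.re hs (‖s‖ * ‖s + 1‖))
    (zTerm_norm_bound s hs)

lemma one_add_ne_zero' (n : ℕ) : ((n : ℂ) + 1) ≠ 0 := by
  have : ((n : ℂ) + 1) = ((n + 1 : ℕ) : ℂ) := by push_cast; ring
  rw [this]
  exact_mod_cast Nat.succ_ne_zero n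

lemma two_add_ne_zero' (n : ℕ) : ((n : ℂ) + 2) ≠ 0 := by
  have : ((n : ℂ) + 2) = ((n + 2 : ℕ) : ℂ) := by push_cast; ring
  rw [this]
  exact_mod_cast Nat.succ_ne_zero (n + 1)

lemma hasSum_nat_add_one_cpow (s : ℂ) (hs : 1 < s.re) :
    HasSum (fun n : ℕ => ((n : ℂ) + 1) ^ (-s)) (riemannZeta s) := by
  have hsummable : Summable (fun n : ℕ => ((n : ℂ) + 1) ^ (-s)) := by
    apply Summable.of_norm_bounded
      (rpow_aux_summable (s.re - 1) (by linarith) 1)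
    intro n
    have hpos : (0:ℝ) < (n : ℝ) + 1 := by positivity
    have h : (((n : ℂ)) + 1) = (((n : ℝ) + 1 : ℝ) : ℂ) := by push_cast; ring
    rw [h, Complex.norm_cpow_eq_rpow_re_of_pos hpos, one_mul]
    apply le_of_eq
    congr 1
    simp [Complex.neg_re]
  have heq : ∑' n : ℕ, ((n : ℂ) + 1) ^ (-s) = riemannZeta s := by
    rw [zeta_eq_tsum_one_div_nat_add_one_cpow hs]
    congr 1
    funext n
    rw [Complex.cpow_neg, one_div]
  exact heq ▸ hsummable.hasSum

lemma hasSum_nat_add_two_cpow (s : ℂ) (hs : 1 < s.re) :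
    HasSum (fun n : ℕ => ((n : ℂ) + 2) ^ (-s)) (riemannZeta s - 1) := by
  have h := hasSum_nat_add_one_cpow s hs
  have h2 : HasSum (fun n : ℕ => (fun m : ℕ => ((m : ℂ) + 1) ^ (-s)) (n + 1))
      (riemannZeta s - 1) := by
    rw [hasSum_nat_add_iff (f := fun m : ℕ => ((m : ℂ) + 1) ^ (-s)) 1]
    have : riemannZeta s - 1 + ∑ i ∈ range 1, ((i : ℂ) + 1) ^ (-s) = riemannZeta s := by
      simp [Complex.one_cpow]
    rwa [this]
  refine h2.congr_fun fun n => ?_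
  push_cast
  ring_nf

lemma zTerm_hasSum (s : ℂ) (hs : 1 < s.re) :
    HasSum (fun n : ℕ => zTerm n s) ((s - 1) * riemannZeta s) := by
  have hs0 : 0 < s.re := by linarith
  rw [(zTerm_summable s hs0).hasSum_iff_tendsto_nat]
  set g : ℕ → ℂ := fun n => ((n : ℂ) + 1) ^ ((1 : ℂ) - s) with hgdef
  have hpt : ∀ n : ℕ, zTerm n s = (g (n + 1) - g n) +
      (-(((n : ℂ) + 2) ^ (-s)) + s * ((n : ℂ) + 1) ^ (-s)) := by
    intro n
    have e1 : g (n + 1) = ((n : ℂ) + 2) ^ ((1 : ℂ) - s) := by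
      rw [hgdef]; push_cast; ring_nf
    have e2 : ((n : ℂ) + 2) ^ ((1 : ℂ) - s) = ((n : ℂ) + 2) * ((n : ℂ) + 2) ^ (-s) := by
      rw [show (1 : ℂ) - s = 1 + (-s) by ring, Complex.cpow_add _ _ (two_add_ne_zero' n),
        Complex.cpow_one]
    simp only [zTerm]
    rw [e1, e2, hgdef]
    ring
  have hg0 : g 0 = 1 := by
    rw [hgdef]
    simp [Complex.one_cpow]
  have hsum_eq : ∀ N : ℕ, ∑ n ∈ range N, zTerm n s =
      (g N - 1) + (-(∑ n ∈ range N, ((n : ℂ) + 2) ^ (-s))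
        + s * ∑ n ∈ range N, ((n : ℂ) + 1) ^ (-s)) := by
    intro N
    rw [Finset.sum_congr rfl fun n _ => hpt n, Finset.sum_add_distrib,
      Finset.sum_range_sub g, hg0, Finset.sum_add_distrib, Finset.sum_neg_distrib,
      ← Finset.mul_sum]
  have T1 : Tendsto (fun N : ℕ => g N) atTop (𝓝 0) := by
    rw [tendsto_zero_iff_norm_tendsto_zero]
    have key : ∀ N : ℕ, ‖g N‖ = ((N : ℝ) + 1) ^ (-(s.re - 1)) := by
      intro N
      have hpos : (0:ℝ) < (N : ℝ) + 1 := by positivity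
      have h : (((N : ℂ)) + 1) = (((N : ℝ) + 1 : ℝ) : ℂ) := by push_cast; ring
      rw [hgdef]
      simp only
      rw [h, Complex.norm_cpow_eq_rpow_re_of_pos hpos]
      congr 1
      simp [Complex.sub_re]
    have h2 : Tendsto (fun N : ℕ => ((N : ℝ) + 1) ^ (-(s.re - 1))) atTop (𝓝 0) := by
      apply (tendsto_rpow_neg_atTop (by linarith : (0:ℝ) < s.re - 1)).comp
      exact tendsto_atTop_add_const_right _ _ tendsto_natCast_atTop_atTop
    exact h2.congr fun N => (key N).symm
  have T2 := (hasSum_nat_add_two_cpow s hs).tendsto_sum_nat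
  have T3 := (hasSum_nat_add_one_cpow s hs).tendsto_sum_nat
  have comb := ((T1.sub (tendsto_const_nhds : Tendsto (fun _ : ℕ => (1:ℂ)) atTop (𝓝 1))).add
    ((T2.neg).add (T3.const_mul s)))
  have hval : ((0:ℂ) - 1) + (-(riemannZeta s - 1) + s * riemannZeta s)
      = (s - 1) * riemannZeta s := by ring
  rw [hval] at comb
  exact comb.congr fun N => (hsum_eq N).symm

noncomputable def zetaF (z : ℂ) : ℂ := ∑' n : ℕ, zTerm n z

lemma zetaF_analyticOnNhd : AnalyticOnNhd ℂ zetaF {z : ℂ | 0 < z.re} := by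
  intro s₀ hs₀
  simp only [Set.mem_setOf_eq] at hs₀
  set V : Set ℂ := {z : ℂ | s₀.re / 2 < z.re} ∩ Metric.ball (0 : ℂ) (‖s₀‖ + 1) with hVdef
  have hVopen : IsOpen V :=
    (isOpen_lt continuous_const Complex.continuous_re).inter Metric.isOpen_ball
  have hs₀V : s₀ ∈ V := by
    constructor
    · simp only [Set.mem_setOf_eq]; linarith
    · simp only [Metric.mem_ball, dist_zero_right]; linarith
  have hdiff : DifferentiableOn ℂ (fun z => ∑' n : ℕ, zTerm n z) V := by
    apply differentiableOn_tsum_of_summable_norm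
      (rpow_aux_summable (s₀.re / 2) (by linarith) ((‖s₀‖ + 1) * (‖s₀‖ + 2)))
    · intro n
      apply Differentiable.differentiableOn
      have h1 : Differentiable ℂ (fun z : ℂ => ((n : ℂ) + 1) ^ (-z)) :=
        differentiable_id.neg.const_cpow (Or.inl (one_add_ne_zero' n))
      have h2 : Differentiable ℂ (fun z : ℂ => ((n : ℂ) + 2) ^ (-z)) :=
        differentiable_id.neg.const_cpow (Or.inl (two_add_ne_zero' n))
      have h3 : Differentiable ℂ (fun z : ℂ => ((n : ℂ) + 1) ^ ((1 : ℂ) - z)) :=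
        ((differentiable_const (1:ℂ)).sub differentiable_id).const_cpow
          (Or.inl (one_add_ne_zero' n))
      exact (((differentiable_const _).mul h2).sub h3).add (differentiable_id.mul h1)
    · exact hVopen
    · intro n w hw
      obtain ⟨hw1, hw2⟩ := hw
      simp only [Set.mem_setOf_eq] at hw1
      rw [Metric.mem_ball, dist_zero_right] at hw2
      have hwre : 0 < w.re := by linarith
      calc ‖zTerm n w‖ ≤ ‖w‖ * ‖w + 1‖ * ((n : ℝ) + 1) ^ (-w.re - 1) :=
            zTerm_norm_bound w hwre n
        _ ≤ (‖s₀‖ + 1) * (‖s₀‖ + 2) * ((n : ℝ) + 1) ^ (-(s₀.re / 2) - 1) := by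
            apply mul_le_mul
            · apply mul_le_mul hw2.le _ (norm_nonneg _) (by positivity)
              calc ‖w + 1‖ ≤ ‖w‖ + 1 := by simpa using norm_add_le w 1
                _ ≤ ‖s₀‖ + 2 := by linarith
            · apply Real.rpow_le_rpow_of_exponent_le (by norm_num)
              linarith
            · positivity
            · positivity
  have hd := hdiff.differentiableAt (hVopen.mem_nhds hs₀V)
  rw [Complex.analyticAt_iff_eventually_differentiableAt]
  filter_upwards [hVopen.mem_nhds hs₀V] with w hw
  exact hdiff.differentiableAt (hVopen.mem_nhds hw)

noncomputable def zetaG : ℂ → ℂ := Function.update (fun z => (z - 1) * riemannZeta z) 1 1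

lemma zetaG_eq {z : ℂ} (hz : z ≠ 1) : zetaG z = (z - 1) * riemannZeta z :=
  Function.update_of_ne hz _ _

lemma zetaG_diffAt {w : ℂ} (hw : w ≠ 1) : DifferentiableAt ℂ zetaG w := by
  have hev : ∀ᶠ x in 𝓝 w, x ≠ 1 := eventually_ne_nhds hw
  have heq : (fun z => (z - 1) * riemannZeta z) =ᶠ[𝓝 w] zetaG :=
    hev.mono fun x hx => (zetaG_eq hx).symm
  exact (((differentiableAt_id.sub_const 1).mul
    (differentiableAt_riemannZeta hw)).congr_of_eventuallyEq heq.symm)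

lemma zetaG_analyticAt (z : ℂ) : AnalyticAt ℂ zetaG z := by
  by_cases hz : z = 1
  · subst hz
    apply Complex.analyticAt_of_differentiable_on_punctured_nhds_of_continuousAt
    · filter_upwards [self_mem_nhdsWithin] with w hw
      exact zetaG_diffAt hw
    · have hG1 : zetaG 1 = 1 := Function.update_self _ _ _
      rw [ContinuousAt, hG1]
      have hT : Tendsto zetaG (𝓝[≠] 1 ⊔ pure 1) (𝓝 1) := by
        rw [tendsto_sup]
        constructor
        · apply riemannZeta_residue_one.congr'
          filter_upwards [self_mem_nhdsWithin] with w hw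
          exact (zetaG_eq hw).symm
        · have h := tendsto_pure_nhds zetaG 1
          rwa [hG1] at h
      rwa [nhdsNE_sup_pure] at hT
  · rw [Complex.analyticAt_iff_eventually_differentiableAt]
    filter_upwards [eventually_ne_nhds hz] with w hw
    exact zetaG_diffAt hw

lemma zetaF_eq_zetaG : Set.EqOn zetaF zetaG {z : ℂ | 0 < z.re} := by
  apply AnalyticOnNhd.eqOn_of_preconnected_of_eventuallyEq zetaF_analyticOnNhd
    (fun z _ => zetaG_analyticAt z) (convex_halfSpace_re_gt 0).isPreconnected
    (show (2:ℂ) ∈ {z : ℂ | 0 < z.re} by norm_num)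
  have hmem : {z : ℂ | 1 < z.re} ∈ 𝓝 (2 : ℂ) := by
    apply (isOpen_lt continuous_const Complex.continuous_re).mem_nhds
    norm_num
  filter_upwards [hmem] with z hz
  have hz : (1:ℝ) < z.re := hz
  have hz1 : z ≠ 1 := by
    intro h
    rw [h] at hz
    norm_num at hz
  rw [zetaG_eq hz1, show zetaF z = ∑' n : ℕ, zTerm n z from rfl,
    (zTerm_hasSum z hz).tsum_eq]

theorem riemannZeta_eq_series (s : ℂ) (hs : 0 < s.re) (hs1 : s ≠ 1) :
    Summable (fun n : ℕ =>
        ((n : ℂ) + 1) * ((n : ℂ) + 2) ^ (-s) - ((n : ℂ) + 1) ^ ((1 : ℂ) - s)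
          + s * ((n : ℂ) + 1) ^ (-s)) ∧
      riemannZeta s = (1 / (s - 1)) *
        ∑' n : ℕ, (((n : ℂ) + 1) * ((n : ℂ) + 2) ^ (-s) - ((n : ℂ) + 1) ^ ((1 : ℂ) - s)
          + s * ((n : ℂ) + 1) ^ (-s)) := by
  refine ⟨zTerm_summable s hs, ?_⟩
  have h := zetaF_eq_zetaG (show s ∈ {z : ℂ | 0 < z.re} from hs)
  rw [zetaG_eq hs1] at h
  rw [show (∑' n : ℕ, (((n : ℂ) + 1) * ((n : ℂ) + 2) ^ (-s) - ((n : ℂ) + 1) ^ ((1 : ℂ) - s)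
      + s * ((n : ℂ) + 1) ^ (-s))) = zetaF s from rfl, h]
  have hne : s - 1 ≠ 0 := sub_ne_zero.mpr hs1
  rw [one_div, ← mul_assoc, inv_mul_cancel₀ hne, one_mul]
end

section
/- For every complex number s with Re(s) > 0 and s ≠ 1, the truncated zeta functions converge to the Riemann zeta function: lim_{N→∞} ζ_w(N; s) = ζ(s). -/
open Complex Filter Set Topology

noncomputable def zwTerm (n : ℕ) (s : ℂ) : ℂ :=
  (n : ℂ) * ((n : ℂ) + 1) ^ (-s) - (n : ℂ) ^ ((1 : ℂ) - s) + s * (n : ℂ) ^ (-s)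

/-- derivative of x ↦ (x:ℂ)^c on positive reals -/
lemma hasDerivAt_real_cpow_cst {x : ℝ} (hx : 0 < x) (c : ℂ) :
    HasDerivAt (fun y : ℝ => (y : ℂ) ^ c) (c * (x : ℂ) ^ (c - 1)) x := by
  have h0 : ((x : ℂ)) ∈ Complex.slitPlane := Or.inl (by simpa using hx)
  have := (HasDerivAt.comp_ofReal (e := fun z : ℂ => z ^ c) (((hasDerivAt_id ((x : ℝ) : ℂ)).cpow_const (c := c) h0)))
  simpa using this

lemma zwTerm_bound {s : ℂ} (hσ : 0 < s.re) {n : ℕ} (hn : 1 ≤ n) :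
    ‖zwTerm n s‖ ≤ ‖s‖ * ‖s + 1‖ * (n : ℝ) ^ (-s.re - 1) := by
  have hn0 : (0:ℝ) < (n : ℝ) := by exact_mod_cast hn
  have hnc : ((n : ℝ) : ℂ) ≠ 0 := by exact_mod_cast hn0.ne'
  set σ := s.re with hσdef
  -- inner mean value estimate
  have inner : ∀ x ∈ Icc (n : ℝ) (n + 1),
      ‖(x : ℂ) ^ (-s - 1) - ((n : ℝ) : ℂ) ^ (-s - 1)‖ ≤ ‖s + 1‖ * (n : ℝ) ^ (-σ - 2) := by
    intro x hx
    refine (convex_Icc (n:ℝ) (n+1)).norm_image_sub_le_of_norm_hasDerivWithin_le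
      (f := fun y : ℝ => (y : ℂ) ^ (-s - 1))
      (f' := fun y : ℝ => (-s - 1) * (y : ℂ) ^ (-s - 2))
      (C := ‖s + 1‖ * (n : ℝ) ^ (-σ - 2)) ?_ ?_ (left_mem_Icc.2 (by linarith)) hx |>.trans ?_
    · intro y hy
      have hy0 : (0:ℝ) < y := lt_of_lt_of_le hn0 hy.1
      have := (hasDerivAt_real_cpow_cst hy0 (-s - 1)).hasDerivWithinAt
        (s := Icc (n:ℝ) (n+1))
      convert this using 2
      ring_nf
    · intro y hy
      have hy0 : (0:ℝ) < y := lt_of_lt_of_le hn0 hy.1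
      have hnn : ‖(y:ℂ) ^ (-s - 2)‖ = y ^ ((-s - 2).re) := by
        rw [Complex.norm_cpow_eq_rpow_re_of_pos hy0]
      have h1 : ‖-s - 1‖ = ‖s + 1‖ := by rw [show -s - 1 = -(s+1) by ring, norm_neg]
      have h2 : (-s - 2).re = -σ - 2 := by simp [hσdef]
      rw [norm_mul, hnn, h1, h2]
      have : y ^ (-σ - 2) ≤ (n:ℝ) ^ (-σ - 2) :=
        Real.rpow_le_rpow_of_nonpos hn0 hy.1 (by linarith)
      exact mul_le_mul_of_nonneg_left this (norm_nonneg _)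
    · have h1 : ‖x - (n:ℝ)‖ ≤ 1 := by
        rw [Real.norm_eq_abs, abs_le]; constructor <;> [linarith [hx.1]; linarith [hx.2]]
      have hC : 0 ≤ ‖s + 1‖ * (n:ℝ) ^ (-σ - 2) :=
        mul_nonneg (norm_nonneg _) (Real.rpow_nonneg hn0.le _)
      calc _ ≤ (‖s + 1‖ * (n:ℝ) ^ (-σ - 2)) * 1 := mul_le_mul_of_nonneg_left h1 hC
        _ = _ := mul_one _
  -- outer mean value estimate
  have outer : ‖((((n:ℝ) + 1) : ℝ) : ℂ) ^ (-s) - ((n:ℝ) : ℂ) ^ (-s)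
      + s * ((n:ℝ) : ℂ) ^ (-s - 1)‖ ≤ ‖s‖ * ‖s + 1‖ * (n : ℝ) ^ (-σ - 2) := by
    have key := (convex_Icc (n:ℝ) (n+1)).norm_image_sub_le_of_norm_hasDerivWithin_le
      (f := fun y : ℝ => (y : ℂ) ^ (-s) + s * ((n:ℝ) : ℂ) ^ (-s - 1) * (y : ℂ))
      (f' := fun y : ℝ => -s * ((y : ℂ) ^ (-s - 1) - ((n:ℝ) : ℂ) ^ (-s - 1)))
      (C := ‖s‖ * (‖s + 1‖ * (n : ℝ) ^ (-σ - 2))) ?_ ?_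
      (left_mem_Icc.2 (by linarith)) (right_mem_Icc.2 (by linarith))
    · have e1 : ‖(((n:ℝ) + 1 : ℝ) : ℂ) ^ (-s) - ((n:ℝ) : ℂ) ^ (-s) + s * ((n:ℝ):ℂ) ^ (-s-1)‖
          = ‖((((n:ℝ)+1 : ℝ) : ℂ) ^ (-s) + s * ((n:ℝ):ℂ) ^ (-s-1) * (((n:ℝ)+1 : ℝ) : ℂ))
            - (((n:ℝ) : ℂ) ^ (-s) + s * ((n:ℝ):ℂ) ^ (-s-1) * ((n:ℝ) : ℂ))‖ := by
        congr 1
        push_cast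
        ring
      rw [e1]
      calc _ ≤ ‖s‖ * (‖s + 1‖ * (n : ℝ) ^ (-σ - 2)) * ‖((n:ℝ) + 1) - (n:ℝ)‖ := key
        _ = ‖s‖ * ‖s + 1‖ * (n : ℝ) ^ (-σ - 2) := by simp [mul_assoc]
    · intro y hy
      have hy0 : (0:ℝ) < y := lt_of_lt_of_le hn0 hy.1
      have d1 := (hasDerivAt_real_cpow_cst hy0 (-s)).hasDerivWithinAt
        (s := Icc (n:ℝ) (n+1))
      have d2 : HasDerivWithinAt (fun y : ℝ => s * ((n:ℝ) : ℂ) ^ (-s - 1) * (y : ℂ))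
          (s * ((n:ℝ) : ℂ) ^ (-s - 1)) (Icc (n:ℝ) (n+1)) y := by
        simpa using ((Complex.ofRealCLM.hasDerivAt (x := y)).const_mul
          (s * ((n:ℝ) : ℂ) ^ (-s - 1))).hasDerivWithinAt (s := Icc (n:ℝ) (n+1))
      convert d1.add d2 using 1
      · rfl
      · ring
    · intro y hy
      rw [norm_mul, norm_neg]
      exact mul_le_mul_of_nonneg_left (inner y hy) (norm_nonneg _)
      
  -- assemble
  have hnc' : (n : ℂ) ≠ 0 := by exact_mod_cast hnc
  have e1 : (n:ℂ) ^ ((1:ℂ) - s) = (n:ℂ) * (n:ℂ) ^ (-s) := by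
    rw [show (1:ℂ) - s = 1 + (-s) by ring, Complex.cpow_add _ _ hnc', Complex.cpow_one]
  have e2 : (n:ℂ) * (n:ℂ) ^ (-s - 1) = (n:ℂ) ^ (-s) := by
    conv_rhs => rw [show (-s) = 1 + (-s - 1) by ring, Complex.cpow_add _ _ hnc',
      Complex.cpow_one]
  have e3 : zwTerm n s = ((n:ℝ) : ℂ) *
      (((((n:ℝ) + 1) : ℝ) : ℂ) ^ (-s) - ((n:ℝ) : ℂ) ^ (-s) + s * ((n:ℝ) : ℂ) ^ (-s - 1)) := by
    unfold zwTerm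
    push_cast
    linear_combination -e1 - s * e2
  rw [e3, norm_mul]
  have hnn : ‖((n:ℝ) : ℂ)‖ = (n:ℝ) := by
    rw [Complex.norm_real, Real.norm_eq_abs, abs_of_pos hn0]
  rw [hnn]
  calc (n:ℝ) * _ ≤ (n:ℝ) * (‖s‖ * ‖s + 1‖ * (n : ℝ) ^ (-σ - 2)) :=
        mul_le_mul_of_nonneg_left outer hn0.le
    _ = ‖s‖ * ‖s + 1‖ * ((n:ℝ) * (n : ℝ) ^ (-σ - 2)) := by ring
    _ = ‖s‖ * ‖s + 1‖ * (n : ℝ) ^ (-σ - 1) := by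
        rw [show -σ - 1 = 1 + (-σ - 2) by ring, Real.rpow_add hn0, Real.rpow_one]

lemma zwTerm_diff (n : ℕ) : Differentiable ℂ (fun s => zwTerm (n + 1) s) := by
  unfold zwTerm
  have h1 : ((n + 1 : ℕ) : ℂ) ≠ 0 := by exact_mod_cast Nat.succ_ne_zero n
  have h2 : ((n + 1 : ℕ) : ℂ) + 1 ≠ 0 := by
    intro h
    have : ((n + 2 : ℕ) : ℂ) = 0 := by push_cast; push_cast at h; linear_combination h
    exact_mod_cast this
  refine ((Differentiable.sub ?_ ?_).add ?_)
  · exact (differentiable_const _).mul ((differentiable_id.neg).const_cpow (Or.inl h2))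
  · exact ((differentiable_const _).sub differentiable_id).const_cpow (Or.inl h1)
  · exact differentiable_id.mul (differentiable_id.neg.const_cpow (Or.inl h1))

lemma zwSummable {s : ℂ} (hσ : 0 < s.re) : Summable (fun n : ℕ => zwTerm (n + 1) s) := by
  apply Summable.of_norm
  have hb : Summable (fun n : ℕ => ‖s‖ * ‖s + 1‖ * ((n + 1 : ℕ) : ℝ) ^ (-s.re - 1)) := by
    apply Summable.mul_left
    have h0 : Summable (fun n : ℕ => (n : ℝ) ^ (-s.re - 1)) :=
      Real.summable_nat_rpow.mpr (by linarith)
    exact_mod_cast (summable_nat_add_iff 1).mpr h0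
  exact Summable.of_nonneg_of_le (fun n => norm_nonneg _)
    (fun n => zwTerm_bound hσ (Nat.le_add_left 1 n)) hb

noncomputable def zwG (s : ℂ) : ℂ := ∑' n : ℕ, zwTerm (n + 1) s

lemma zwRange_eq_Icc (s : ℂ) (N : ℕ) :
    ∑ n ∈ Finset.range N, zwTerm (n + 1) s = ∑ n ∈ Finset.Icc 1 N, zwTerm n s := by
  rw [← Finset.Ico_add_one_right_eq_Icc, Finset.sum_Ico_eq_sum_range]
  simp [add_comm]

lemma zwTelescope (s : ℂ) (N : ℕ) :
    ∑ n ∈ Finset.Icc 1 N, zwTerm n s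
      = (N : ℂ) * ((N : ℂ) + 1) ^ (-s) + (s - 1) * ∑ n ∈ Finset.Icc 1 N, (n : ℂ) ^ (-s) := by
  induction N with
  | zero => simp
  | succ N ih =>
    have hne : ((N : ℂ) + 1) ≠ 0 := by
      intro h
      have : ((N + 1 : ℕ) : ℂ) = 0 := by push_cast; linear_combination h
      exact_mod_cast this
    have e1 : ((N : ℂ) + 1) ^ ((1:ℂ) - s) = ((N : ℂ) + 1) * ((N : ℂ) + 1) ^ (-s) := by
      rw [show (1:ℂ) - s = 1 + (-s) by ring, Complex.cpow_add _ _ hne, Complex.cpow_one]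
    rw [Finset.sum_Icc_succ_top (by omega), Finset.sum_Icc_succ_top (by omega), ih]
    unfold zwTerm
    push_cast
    linear_combination -e1

open Filter in
lemma zwG_eq {t : ℂ} (ht : 1 < t.re) : zwG t = (t - 1) * riemannZeta t := by
  have hσ : 0 < t.re := lt_trans one_pos ht
  have hsum : Tendsto (fun N : ℕ => ∑ n ∈ Finset.Icc 1 N, zwTerm n t) atTop (𝓝 (zwG t)) := by
    have := (zwSummable hσ).hasSum.tendsto_sum_nat
    simpa only [zwRange_eq_Icc, zwG] using this
  -- limit of remainder term
  have h1 : Tendsto (fun N : ℕ => (N : ℂ) * ((N : ℂ) + 1) ^ (-t)) atTop (𝓝 0) := by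
    apply squeeze_zero_norm (a := fun N : ℕ => ((N : ℝ) + 1) ^ (1 - t.re))
    · intro N
      have hp : (0:ℝ) < (N : ℝ) + 1 := by positivity
      have e : ‖((N : ℂ) + 1) ^ (-t)‖ = ((N:ℝ) + 1) ^ (-t.re) := by
        have : ((N : ℂ) + 1) = (((N : ℝ) + 1 : ℝ) : ℂ) := by push_cast; ring
        rw [this, Complex.norm_cpow_eq_rpow_re_of_pos hp]
        simp
      rw [norm_mul, e]
      have hN : ‖(N : ℂ)‖ ≤ (N : ℝ) + 1 := by
        rw [Complex.norm_natCast]; linarith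
      calc ‖(N:ℂ)‖ * ((N:ℝ)+1) ^ (-t.re) ≤ ((N:ℝ)+1) * ((N:ℝ)+1) ^ (-t.re) :=
            mul_le_mul_of_nonneg_right hN (Real.rpow_nonneg hp.le _)
        _ = ((N:ℝ)+1) ^ (1 - t.re) := by
            rw [show (1 : ℝ) - t.re = 1 + (-t.re) by ring, Real.rpow_add hp, Real.rpow_one]
    · have hbase : Tendsto (fun N : ℕ => (N : ℝ) + 1) atTop atTop :=
        tendsto_atTop_add_const_right _ _ tendsto_natCast_atTop_atTop
      have := (tendsto_rpow_neg_atTop (y := t.re - 1) (by linarith)).comp hbase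
      simpa [neg_sub, Function.comp_def] using this
  -- limit of zeta partial sums
  have h2 : Tendsto (fun N : ℕ => ∑ n ∈ Finset.Icc 1 N, (n : ℂ) ^ (-t)) atTop
      (𝓝 (riemannZeta t)) := by
    have hs2 : Summable (fun n : ℕ => 1 / ((n : ℂ) + 1) ^ t) := by
      have := Complex.summable_one_div_nat_cpow.mpr ht
      exact_mod_cast (summable_nat_add_iff 1).mpr this
    have := hs2.hasSum.tendsto_sum_nat
    rw [← (zeta_eq_tsum_one_div_nat_add_one_cpow ht)] at this
    convert this using 2 with N
    rw [← Finset.Ico_add_one_right_eq_Icc, Finset.sum_Ico_eq_sum_range]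
    refine Finset.sum_congr rfl fun i _ => ?_
    rw [Complex.cpow_neg, one_div]
    push_cast
    rw [add_comm 1 (i:ℂ)]
  have h3 : Tendsto (fun N : ℕ => (N : ℂ) * ((N : ℂ) + 1) ^ (-t)
      + (t - 1) * ∑ n ∈ Finset.Icc 1 N, (n : ℂ) ^ (-t)) atTop (𝓝 (0 + (t-1) * riemannZeta t)) :=
    h1.add (tendsto_const_nhds.mul h2)
  rw [zero_add] at h3
  exact tendsto_nhds_unique (by simpa only [zwTelescope] using hsum) h3

lemma zwG_differentiableOn : DifferentiableOn ℂ zwG {s : ℂ | 0 < s.re} := by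
  have hU : IsOpen {s : ℂ | 0 < s.re} := isOpen_lt continuous_const Complex.continuous_re
  have hloc : TendstoLocallyUniformlyOn
      (fun N s => ∑ n ∈ Finset.range N, zwTerm (n + 1) s) zwG atTop {s : ℂ | 0 < s.re} := by
    rw [tendstoLocallyUniformlyOn_iff_forall_isCompact hU]
    intro K hKU hK
    rcases K.eq_empty_or_nonempty with hKe | hKne
    · rw [hKe]; exact tendstoUniformlyOn_empty
    obtain ⟨z0, hz0K, hmin⟩ := hK.exists_isMinOn hKne Complex.continuous_re.continuousOn
    obtain ⟨z1, hz1K, hmax⟩ := hK.exists_isMaxOn hKne continuous_norm.continuousOn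
    set σ0 := z0.re with hσ0
    have hσ0pos : 0 < σ0 := hKU hz0K
    set R := ‖z1‖ with hR
    apply tendstoUniformlyOn_tsum_nat (u := fun n : ℕ => R * (R + 1) * ((n + 1 : ℕ) : ℝ) ^ (-σ0 - 1))
    · apply Summable.mul_left
      have h0 : Summable (fun n : ℕ => (n : ℝ) ^ (-σ0 - 1)) :=
        Real.summable_nat_rpow.mpr (by linarith)
      exact_mod_cast (summable_nat_add_iff 1).mpr h0
    · intro n x hx
      have hxre : 0 < x.re := hKU hx
      have hb := zwTerm_bound hxre (n := n + 1) (Nat.le_add_left 1 n)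
      refine hb.trans ?_
      have hn1 : (1:ℝ) ≤ ((n + 1 : ℕ) : ℝ) := by exact_mod_cast Nat.le_add_left 1 n
      have hmono : ((n + 1 : ℕ) : ℝ) ^ (-x.re - 1) ≤ ((n + 1 : ℕ) : ℝ) ^ (-σ0 - 1) := by
        apply Real.rpow_le_rpow_of_exponent_le hn1
        have : σ0 ≤ x.re := hmin hx
        linarith
      have hxR : ‖x‖ ≤ R := hmax hx
      have hx1R : ‖x + 1‖ ≤ R + 1 := (norm_add_le _ _).trans (by rw [norm_one]; linarith)
      have hRnn : 0 ≤ R := (norm_nonneg _).trans hxR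
      calc ‖x‖ * ‖x + 1‖ * ((n + 1 : ℕ) : ℝ) ^ (-x.re - 1)
          ≤ R * (R + 1) * ((n + 1 : ℕ) : ℝ) ^ (-x.re - 1) := by
            apply mul_le_mul_of_nonneg_right _ (Real.rpow_nonneg (by positivity) _)
            exact mul_le_mul hxR hx1R (norm_nonneg _) hRnn
        _ ≤ R * (R + 1) * ((n + 1 : ℕ) : ℝ) ^ (-σ0 - 1) := by
            apply mul_le_mul_of_nonneg_left hmono (by positivity)
  exact hloc.differentiableOn
    (Filter.Eventually.of_forall fun N =>
      (Differentiable.fun_sum fun n _ => zwTerm_diff n).differentiableOn) hU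

lemma zwU_preconnected : IsPreconnected {s : ℂ | 0 < s.re ∧ s ≠ 1} := by
  have hC1 : Convex ℝ {z : ℂ | 0 < z.re ∧ z.re < 1} :=
    (convex_halfSpace_re_gt 0).inter (convex_halfSpace_re_lt 1)
  have hC2 : Convex ℝ {z : ℂ | 0 < z.re ∧ 0 < z.im} :=
    (convex_halfSpace_re_gt 0).inter (convex_halfSpace_im_gt 0)
  have hC3 : Convex ℝ {z : ℂ | 1 < z.re} := convex_halfSpace_re_gt 1
  have hC4 : Convex ℝ {z : ℂ | 0 < z.re ∧ z.im < 0} :=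
    (convex_halfSpace_re_gt 0).inter (convex_halfSpace_im_lt 0)
  have hp1 : IsPreconnected ({z : ℂ | 0 < z.re ∧ z.re < 1} ∪ {z : ℂ | 0 < z.re ∧ 0 < z.im}) := by
    apply IsPreconnected.union (((1/2 : ℝ) : ℂ) + Complex.I)
    · constructor <;> norm_num
    · constructor <;> norm_num
    · exact hC1.isPreconnected
    · exact hC2.isPreconnected
  have hp2 : IsPreconnected ({z : ℂ | 1 < z.re} ∪ {z : ℂ | 0 < z.re ∧ z.im < 0}) := by
    apply IsPreconnected.union ((2 : ℂ) - Complex.I)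
    · simp
    · constructor <;> norm_num
    · exact hC3.isPreconnected
    · exact hC4.isPreconnected
  have key : IsPreconnected (({z : ℂ | 0 < z.re ∧ z.re < 1} ∪ {z : ℂ | 0 < z.re ∧ 0 < z.im})
      ∪ ({z : ℂ | 1 < z.re} ∪ {z : ℂ | 0 < z.re ∧ z.im < 0})) := by
    apply IsPreconnected.union (((1/2 : ℝ) : ℂ) - Complex.I)
    · left; constructor <;> norm_num
    · right; constructor <;> norm_num
    · exact hp1
    · exact hp2
  convert key using 1
  ext z
  simp only [Set.mem_setOf_eq, Set.mem_union]
  constructor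
  · rintro ⟨hre, hne⟩
    rcases lt_trichotomy z.im 0 with him | him | him
    · exact Or.inr (Or.inr ⟨hre, him⟩)
    · rcases lt_trichotomy z.re 1 with hr | hr | hr
      · exact Or.inl (Or.inl ⟨hre, hr⟩)
      · exact absurd (Complex.ext hr him) hne
      · exact Or.inr (Or.inl hr)
    · exact Or.inl (Or.inr ⟨hre, him⟩)
  · rintro ((⟨h1, h2⟩ | ⟨h1, h2⟩) | h1 | ⟨h1, h2⟩)
    · exact ⟨h1, fun h => by simp [h] at h2⟩
    · exact ⟨h1, fun h => by simp [h] at h2⟩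
    · exact ⟨by linarith, fun h => by simp [h] at h1⟩
    · exact ⟨h1, fun h => by simp [h] at h2⟩

lemma zwG_eq_on {s : ℂ} (hσ : 0 < s.re) (hs1 : s ≠ 1) :
    zwG s = (s - 1) * riemannZeta s := by
  set U : Set ℂ := {z : ℂ | 0 < z.re ∧ z ≠ 1} with hUdef
  have hUo : IsOpen U := by
    apply IsOpen.inter (isOpen_lt continuous_const Complex.continuous_re) isOpen_compl_singleton
  have hG : AnalyticOnNhd ℂ zwG U :=
    (zwG_differentiableOn.analyticOnNhd
      (isOpen_lt continuous_const Complex.continuous_re)).mono fun z hz => hz.1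
  have hZ : AnalyticOnNhd ℂ (fun z => (z - 1) * riemannZeta z) U := by
    refine DifferentiableOn.analyticOnNhd (fun z hz => DifferentiableAt.differentiableWithinAt ?_) hUo
    exact (differentiableAt_id.sub_const 1).mul (differentiableAt_riemannZeta hz.2)
  have h2U : (2 : ℂ) ∈ U := by
    constructor
    · simp
    · intro h
      have := congrArg Complex.re h
      simp at this
  have hV : {z : ℂ | 1 < z.re} ∈ 𝓝 (2 : ℂ) :=
    (Complex.continuous_re.isOpen_preimage _ isOpen_Ioi).mem_nhds (by simp)
  have heq : zwG =ᶠ[𝓝 (2 : ℂ)] fun z => (z - 1) * riemannZeta z :=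
    Filter.eventually_of_mem hV fun t ht => zwG_eq ht
  exact hG.eqOn_of_preconnected_of_eventuallyEq hZ zwU_preconnected h2U heq ⟨hσ, hs1⟩


/-- The truncated zeta function `ζ_w(N; s)`. -/
noncomputable def zetaW (N : ℕ) (s : ℂ) : ℂ :=
  (1 / (s - 1)) * ∑ n ∈ Finset.Icc 1 N,
    ((n : ℂ) * ((n : ℂ) + 1) ^ (-s) - (n : ℂ) ^ ((1 : ℂ) - s) + s * (n : ℂ) ^ (-s))

theorem zetaW_tendsto_riemannZeta (s : ℂ) (hs : 0 < s.re) (hs1 : s ≠ 1) :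
    Filter.Tendsto (fun N : ℕ => zetaW N s) Filter.atTop (nhds (riemannZeta s)) := by
  have hne : s - 1 ≠ 0 := sub_ne_zero.mpr hs1
  have h1 : Tendsto (fun N : ℕ => ∑ n ∈ Finset.Icc 1 N, zwTerm n s) atTop (𝓝 (zwG s)) := by
    simpa only [zwRange_eq_Icc, zwG] using (zwSummable hs).hasSum.tendsto_sum_nat
  have h2 := h1.const_mul (1 / (s - 1))
  have h3 : (1 / (s - 1)) * zwG s = riemannZeta s := by
    rw [zwG_eq_on hs hs1]
    field_simp
  rw [h3] at h2
  have h4 : (fun N : ℕ => zetaW N s)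
      = fun N : ℕ => (1 / (s - 1)) * ∑ n ∈ Finset.Icc 1 N, zwTerm n s := rfl
  rw [h4]
  exact h2
end

section
/- For every positive integer N, ∫_{−1}^0 ζ_w(N; s) ds = 1 + (N/(N+1))·( Li(N+1) − Li((N+1)²) ) + Σ_{n=1}^{N−1} n/ln(n+1), where Li(x) = ∫_0^{ln x} (e^y − 1)/y dy + ln(ln x) + γ and γ is the Euler–Mascheroni constant. -/
open intervalIntegral MeasureTheory

/-- The logarithmic integral `Li(x) = ∫_0^{ln x} (e^y - 1)/y dy + ln(ln x) + γ`. -/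
noncomputable def logIntegral (x : ℝ) : ℝ :=
  (∫ y in (0 : ℝ)..(Real.log x), (Real.exp y - 1) / y)
    + Real.log (Real.log x) + Real.eulerMascheroniConstant

private lemma sum_telescope (N : ℕ) (s : ℂ) :
    ∑ n ∈ Finset.Icc 1 N,
      ((n : ℂ) * ((n : ℂ) + 1) ^ (-s) - (n : ℂ) ^ ((1 : ℂ) - s) + s * (n : ℂ) ^ (-s))
      = (N : ℂ) * ((N : ℂ) + 1) ^ (-s) + (s - 1) * ∑ n ∈ Finset.Icc 1 N, (n : ℂ) ^ (-s) := by
  induction N with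
  | zero => simp
  | succ N ih =>
      rw [Finset.sum_Icc_succ_top (by omega : 1 ≤ N + 1),
          Finset.sum_Icc_succ_top (by omega : 1 ≤ N + 1), ih]
      have hb : ((N : ℂ) + 1) ≠ 0 := by
        have : ((N : ℂ) + 1) = ((N + 1 : ℕ) : ℂ) := by push_cast; ring
        rw [this]
        exact Nat.cast_ne_zero.mpr (Nat.succ_ne_zero N)
      have h1 : ((N + 1 : ℕ) : ℂ) ^ ((1 : ℂ) - s) = ((N : ℂ) + 1) * ((N : ℂ) + 1) ^ (-s) := by
        push_cast
        rw [sub_eq_add_neg, Complex.cpow_add _ _ hb, Complex.cpow_one]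
      rw [h1]
      push_cast
      ring

lemma zetaW_eq (N : ℕ) (s : ℂ) (hs : s ≠ 1) :
    zetaW N s = (N : ℂ) * ((N : ℂ) + 1) ^ (-s) / (s - 1) + ∑ n ∈ Finset.Icc 1 N, (n : ℂ) ^ (-s) := by
  have h : s - 1 ≠ 0 := sub_ne_zero.mpr hs
  rw [zetaW, sum_telescope]
  field_simp



lemma F_eval (n : ℕ) (hn : 2 ≤ n) :
    (∫ s in (-1 : ℝ)..0, (n : ℂ) ^ (-(s : ℂ))) = ((n : ℂ) - 1) / (Real.log n : ℂ) := by
  have hn0 : (0 : ℝ) < n := by positivity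
  have hn1 : (1 : ℝ) < n := by exact_mod_cast hn
  have hL : (0 : ℝ) < Real.log n := Real.log_pos hn1
  have hne : (n : ℂ) ≠ 0 := Nat.cast_ne_zero.mpr (by omega)
  have hrw : ∀ s : ℝ, (n : ℂ) ^ (-(s : ℂ)) = Complex.exp ((-(Real.log n : ℂ)) * s) := by
    intro s
    rw [Complex.cpow_def_of_ne_zero hne]
    congr 1
    rw [show Complex.log (n : ℂ) = ((Real.log n : ℝ) : ℂ) by
      rw [← Complex.ofReal_natCast, Complex.ofReal_log hn0.le]]
    ring
  simp only [hrw]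
  rw [integral_exp_mul_complex (by
    simp only [ne_eq, neg_eq_zero]
    exact_mod_cast hL.ne')]
  have he : Complex.exp (-(Real.log n : ℂ) * (-1 : ℝ)) = (n : ℂ) := by
    rw [show (-(Real.log n : ℂ) * ((-1 : ℝ) : ℂ)) = ((Real.log n : ℝ) : ℂ) by push_cast; ring,
      ← Complex.ofReal_exp, Real.exp_log hn0, Complex.ofReal_natCast]
  rw [he, show (-(Real.log n : ℂ) * ((0 : ℝ) : ℂ)) = 0 by push_cast; ring, Complex.exp_zero]
  have hLc : (Real.log n : ℂ) ≠ 0 := by exact_mod_cast hL.ne'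
  field_simp
  ring

lemma F_int (n : ℕ) (hn : 1 ≤ n) (a b : ℝ) :
    IntervalIntegrable (fun s : ℝ => (n : ℂ) ^ (-(s : ℂ))) MeasureTheory.volume a b := by
  have hne : (n : ℂ) ≠ 0 := Nat.cast_ne_zero.mpr (by omega)
  exact (Complex.continuous_ofReal.neg.const_cpow (Or.inl hne)).intervalIntegrable a b

lemma partA (N : ℕ) (hN : 1 ≤ N) :
    (∑ n ∈ Finset.Icc 1 N, ∫ s in (-1 : ℝ)..0, (n : ℂ) ^ (-(s : ℂ)))
      = 1 + ∑ n ∈ Finset.Icc 1 (N - 1), (n : ℂ) / (Real.log ((n : ℝ) + 1) : ℂ) := by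
  induction N, hN using Nat.le_induction with
  | base => simp
  | succ N hN ih =>
      rw [Finset.sum_Icc_succ_top (by omega : 1 ≤ N + 1), ih, Nat.add_sub_cancel]
      have hs : ∑ n ∈ Finset.Icc 1 N, (n : ℂ) / (Real.log ((n : ℝ) + 1) : ℂ)
          = ∑ n ∈ Finset.Icc 1 (N - 1), (n : ℂ) / (Real.log ((n : ℝ) + 1) : ℂ)
            + (N : ℂ) / (Real.log ((N : ℝ) + 1) : ℂ) := by
        conv_lhs => rw [show N = (N - 1) + 1 by omega]
        rw [Finset.sum_Icc_succ_top (by omega : 1 ≤ (N - 1) + 1)]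
        rw [show (N - 1) + 1 = N by omega]
      rw [hs, F_eval (N + 1) (by omega)]
      have : (((N + 1 : ℕ) : ℂ) - 1) / (Real.log ((N + 1 : ℕ) : ℝ) : ℂ)
          = (N : ℂ) / (Real.log ((N : ℝ) + 1) : ℂ) := by push_cast; ring
      rw [this]
      ring



-- integrability of (e^y - 1)/y on [0, c]
lemma hInt (c : ℝ) (hc : 0 ≤ c) :
    IntervalIntegrable (fun y : ℝ => (Real.exp y - 1) / y) volume 0 c := by
  rw [intervalIntegrable_iff, Set.uIoc_of_le hc]
  apply Integrable.mono' (g := fun _ => Real.exp c) (integrableOn_const measure_Ioc_lt_top.ne)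
  · exact ((Real.measurable_exp.sub measurable_const).div measurable_id).aestronglyMeasurable
  · rw [ae_restrict_iff' measurableSet_Ioc]
    filter_upwards with y hy
    obtain ⟨hy0, hyc⟩ := hy
    have h1 : Real.exp y - 1 ≤ y * Real.exp y := by
      have h2 := Real.add_one_le_exp (-y)
      rw [Real.exp_neg] at h2
      have hp : (0 : ℝ) < Real.exp y := Real.exp_pos y
      have h3 := mul_le_mul_of_nonneg_right h2 hp.le
      rw [inv_mul_cancel₀ hp.ne'] at h3
      nlinarith
    have h4 : Real.exp y ≤ Real.exp c := Real.exp_le_exp.mpr hyc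
    have h5 : (0 : ℝ) ≤ Real.exp y - 1 := by
      have := Real.one_le_exp hy0.le; linarith
    rw [Real.norm_eq_abs, abs_of_nonneg (div_nonneg h5 hy0.le), div_le_iff₀ hy0]
    nlinarith

lemma expuInt (a b : ℝ) (ha : 0 < a) (hb : a ≤ b) :
    IntervalIntegrable (fun u : ℝ => Real.exp u / u) volume a b := by
  apply ContinuousOn.intervalIntegrable
  apply ContinuousOn.div Real.continuous_exp.continuousOn continuousOn_id
  intro x hx
  rw [Set.uIcc_of_le hb] at hx
  exact (lt_of_lt_of_le ha hx.1).ne'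

lemma partB (a : ℝ) (ha : 0 < a) :
    (∫ s in (-1 : ℝ)..0, Real.exp (-(s * a)) / (s - 1))
      = -Real.exp (-a) * ∫ u in a..(2 * a), Real.exp u / u := by
  have hkey : ∀ s : ℝ, Real.exp (-(s * a)) / (s - 1)
      = (fun u => (-a * Real.exp (u - a)) / u) (-a * s + a) := by
    intro s
    rcases eq_or_ne s 1 with rfl | hs
    · simp
    · simp only
      rw [show -a * s + a = -a * (s - 1) by ring]
      rw [show -a * (s - 1) - a = -a * s + a - a - a * (s-1) + a*(s-1) by ring]
      rw [mul_div_mul_left _ _ (neg_ne_zero.mpr ha.ne')]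
      congr 2
      ring
  simp only [hkey]
  rw [intervalIntegral.integral_comp_mul_add (fun u => (-a * Real.exp (u - a)) / u)
    (neg_ne_zero.mpr ha.ne') a]
  rw [show -a * (-1) + a = 2 * a by ring, show -a * 0 + a = a by ring]
  rw [intervalIntegral.integral_symm]
  have : ∀ u : ℝ, (-a * Real.exp (u - a)) / u = (-a * Real.exp (-a)) * (Real.exp u / u) := by
    intro u
    rw [Real.exp_sub, Real.exp_neg]
    field_simp
  simp only [this]
  rw [intervalIntegral.integral_const_mul]
  rw [smul_eq_mul]
  field_simp

lemma partC (a : ℝ) (ha : 0 < a) :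
    ((∫ y in (0:ℝ)..a, (Real.exp y - 1) / y) + Real.log a)
      - ((∫ y in (0:ℝ)..(2*a), (Real.exp y - 1) / y) + Real.log (2*a))
      = -∫ u in a..(2*a), Real.exp u / u := by
  have h2a : (0:ℝ) ≤ 2 * a := by linarith
  have hmid : IntervalIntegrable (fun y : ℝ => (Real.exp y - 1) / y) volume a (2*a) := by
    apply (hInt (2*a) h2a).mono_set
    apply Set.uIcc_subset_uIcc
    · exact Set.mem_uIcc.mpr (Or.inl ⟨ha.le, by linarith⟩)
    · exact Set.right_mem_uIcc
  have hsplit := intervalIntegral.integral_add_adjacent_intervals (hInt a ha.le) hmid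
  have hzero : (0:ℝ) ∉ Set.uIcc a (2*a) := by
    rw [Set.uIcc_of_le (by linarith)]
    intro h
    exact absurd h.1 (by linarith)
  have hone : IntervalIntegrable (fun u : ℝ => 1 / u) volume a (2*a) := by
    apply ContinuousOn.intervalIntegrable
    apply ContinuousOn.div continuousOn_const continuousOn_id
    intro x hx
    rw [Set.uIcc_of_le (by linarith : a ≤ 2*a)] at hx
    exact (lt_of_lt_of_le ha hx.1).ne'
  have hmid2 : (∫ y in a..(2*a), (Real.exp y - 1) / y)
      = (∫ u in a..(2*a), Real.exp u / u) - Real.log 2 := by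
    have : ∀ y : ℝ, (Real.exp y - 1) / y = Real.exp y / y - 1 / y := fun y => sub_div _ _ _
    simp only [this]
    rw [intervalIntegral.integral_sub (expuInt a (2*a) ha (by linarith)) hone,
      integral_one_div hzero, mul_div_assoc, div_self ha.ne', mul_one]
  have hlog : Real.log (2*a) = Real.log 2 + Real.log a := Real.log_mul two_ne_zero ha.ne'
  rw [hlog]
  rw [← hsplit, hmid2]
  ring

theorem integral_zetaW_neg_one_zero (N : ℕ) (hN : 0 < N) :
    (∫ s in (-1 : ℝ)..0, zetaW N (s : ℂ)) =
      1 + ((N : ℂ) / ((N : ℂ) + 1)) *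
          ((logIntegral ((N : ℝ) + 1) : ℂ) - (logIntegral (((N : ℝ) + 1) ^ 2) : ℂ))
        + ∑ n ∈ Finset.Icc 1 (N - 1), (n : ℂ) / (Real.log ((n : ℝ) + 1) : ℂ) := by
  have hN1 : (1 : ℝ) < (N : ℝ) + 1 := by
    have : (1 : ℝ) ≤ (N : ℝ) := by exact_mod_cast hN
    linarith
  have hb0 : (0 : ℝ) < (N : ℝ) + 1 := by linarith
  set a := Real.log ((N : ℝ) + 1) with hadef
  have ha : 0 < a := Real.log_pos hN1
  set E := ∫ u in a..(2 * a), Real.exp u / u with hEdef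
  -- pointwise rewrite on the interval
  have hEq : Set.EqOn (fun s : ℝ => zetaW N (s : ℂ))
      (fun s : ℝ => (((N : ℝ) * (Real.exp (-(s * a)) / (s - 1)) : ℝ) : ℂ)
        + ∑ n ∈ Finset.Icc 1 N, (n : ℂ) ^ (-(s : ℂ)))
      (Set.uIcc (-1 : ℝ) 0) := by
    intro s hs
    rw [Set.uIcc_of_le (by norm_num : (-1 : ℝ) ≤ 0)] at hs
    have hs1 : (s : ℂ) ≠ 1 := by
      intro h
      have : s = 1 := by exact_mod_cast h
      linarith [hs.2]
    simp only
    rw [zetaW_eq N _ hs1]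
    congr 1
    have hcp : ((N : ℂ) + 1) ^ (-(s : ℂ)) = ((((N : ℝ) + 1) ^ (-s) : ℝ) : ℂ) := by
      rw [Complex.ofReal_cpow hb0.le]
      norm_cast
    have hexp : ((N : ℝ) + 1) ^ (-s) = Real.exp (-(s * a)) := by
      rw [Real.rpow_def_of_pos hb0]
      rw [show Real.log ((N : ℝ) + 1) * (-s) = -(s * a) by rw [hadef]; ring]
    rw [hcp, hexp]
    push_cast
    ring
  rw [intervalIntegral.integral_congr hEq]
  have hInt1 : IntervalIntegrable
      (fun s : ℝ => (((N : ℝ) * (Real.exp (-(s * a)) / (s - 1)) : ℝ) : ℂ))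
      volume (-1) 0 := by
    apply ContinuousOn.intervalIntegrable
    apply Complex.continuous_ofReal.comp_continuousOn
    apply ContinuousOn.mul continuousOn_const
    apply ContinuousOn.div
    · exact (Real.continuous_exp.comp ((continuous_id.mul continuous_const).neg)).continuousOn
    · exact (continuous_id.sub continuous_const).continuousOn
    · intro x hx
      rw [Set.uIcc_of_le (by norm_num : (-1 : ℝ) ≤ 0)] at hx
      have := hx.2
      intro h
      have : x = 1 := by linarith [sub_eq_zero.mp h]
      linarith [hx.2]
  have hInt2 : IntervalIntegrable
      (fun s : ℝ => ∑ n ∈ Finset.Icc 1 N, (n : ℂ) ^ (-(s : ℂ))) volume (-1) 0 := by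
    apply Continuous.intervalIntegrable
    apply continuous_finset_sum
    intro n hn
    have hne : (n : ℂ) ≠ 0 :=
      Nat.cast_ne_zero.mpr (by have := (Finset.mem_Icc.mp hn).1; omega)
    exact Complex.continuous_ofReal.neg.const_cpow (Or.inl hne)
  rw [intervalIntegral.integral_add hInt1 hInt2]
  rw [intervalIntegral.integral_ofReal]
  rw [intervalIntegral.integral_finset_sum (fun n hn => F_int n (Finset.mem_Icc.mp hn).1 _ _)]
  rw [partA N hN]
  rw [intervalIntegral.integral_const_mul, partB a ha, ← hEdef]
  have hexpa : Real.exp (-a) = ((N : ℝ) + 1)⁻¹ := by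
    rw [Real.exp_neg, hadef, Real.exp_log hb0]
  -- handle the logIntegral difference
  have hLi : logIntegral ((N : ℝ) + 1) - logIntegral (((N : ℝ) + 1) ^ 2) = -E := by
    have hlog2 : Real.log (((N : ℝ) + 1) ^ 2) = 2 * a := by
      rw [Real.log_pow]; push_cast; rw [hadef]
    rw [logIntegral, logIntegral, hlog2, ← hadef]
    have := partC a ha
    rw [← hEdef] at this
    linarith
  have hcast : (logIntegral ((N : ℝ) + 1) : ℂ) - (logIntegral (((N : ℝ) + 1) ^ 2) : ℂ)
      = ((-E : ℝ) : ℂ) := by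
    rw [← Complex.ofReal_sub, hLi]
  rw [hcast, hexpa]
  have hne : ((N : ℂ) + 1) ≠ 0 := by
    have : ((N : ℂ) + 1) = ((N + 1 : ℕ) : ℂ) := by push_cast; ring
    rw [this]
    exact Nat.cast_ne_zero.mpr (Nat.succ_ne_zero N)
  push_cast
  field_simp
  ring
end

section
/- For every positive integer N, the exponential-integral contribution to the critical-strip integral vanishes at infinity: lim_{t→∞} (N/(N+1))·( Ei₁(i·t·ln(N+1) − ln(N+1)) − Ei₁(i·t·ln(N+1)) ) = 0, where t ranges over positive reals. -/
open Complex MeasureTheory Filter intervalIntegral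

open Complex in
/-- The exponential integral `Ei₁(z) = z·∫_0^1∫_0^1 e^{-zxy} dy dx - γ - log z`. -/
noncomputable def expIntegralE1 (z : ℂ) : ℂ :=
  z * (∫ x in (0 : ℝ)..1, ∫ y in (0 : ℝ)..1, Complex.exp (-z * x * y))
    - (Real.eulerMascheroniConstant : ℂ) - Complex.log z

lemma aux_cont (z : ℂ) :
    Continuous fun x : ℝ => z * ∫ y in (0:ℝ)..1, Complex.exp (-z * x * y) := by
  apply continuous_const.mul
  apply continuous_parametric_intervalIntegral_of_continuous'
    (f := fun (x : ℝ) (y : ℝ) => Complex.exp (-z * x * y))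
  fun_prop

lemma aux_P (z : ℂ) (hz : z ≠ 0) (x : ℝ) (hx : x ≠ 0) :
    z * ∫ y in (0:ℝ)..1, Complex.exp (-z * x * y) = (1 - Complex.exp (-z * x)) / x := by
  have hc : -z * (x : ℂ) ≠ 0 := by
    simp [hz, hx]
  rw [integral_exp_mul_complex hc]
  have hx' : (x : ℂ) ≠ 0 := Complex.ofReal_ne_zero.mpr hx
  simp only [Complex.ofReal_one, Complex.ofReal_zero, mul_one, mul_zero, Complex.exp_zero]
  field_simp
  ring

lemma diff_formula (a t : ℝ) (ha : 0 < a) (ht : 0 < t) :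
    expIntegralE1 (I * t * a - a) - expIntegralE1 (I * t * a)
      = (∫ x in (0:ℝ)..1, Complex.exp (-(I * t * a) * x) * ((1 - Complex.exp (a * x)) / x))
        - Complex.log (1 + I / t) := by
  set z₂ : ℂ := I * t * a with hz₂def
  set z₁ : ℂ := z₂ - a with hz₁def
  have hta : (0:ℝ) < t * a := mul_pos ht ha
  have hz₂ : z₂ ≠ 0 := by
    simp only [hz₂def]
    exact mul_ne_zero (mul_ne_zero I_ne_zero (Complex.ofReal_ne_zero.mpr ht.ne'))
      (Complex.ofReal_ne_zero.mpr ha.ne')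
  have hz₁ : z₁ ≠ 0 := by
    intro h
    have h2 := congrArg Complex.im h
    simp [hz₁def, hz₂def] at h2
    rcases h2 with h|h
    · exact ht.ne' h
    · exact ha.ne' h
  -- log part
  have hne : (1 + I / t : ℂ) ≠ 0 := by
    intro h
    have h2 := congrArg Complex.re h
    simp at h2
  have hz₁eq : z₁ = (1 + I / t) * z₂ := by
    have htne : (t : ℂ) ≠ 0 := Complex.ofReal_ne_zero.mpr ht.ne'
    field_simp [hz₁def, hz₂def]
    ring_nf
    rw [hz₁def, hz₂def]
    linear_combination (-(↑t * ↑a : ℂ)) * Complex.I_sq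
  have hargz₂ : z₂.arg = Real.pi / 2 := by
    have : z₂ = (↑(t * a) : ℂ) * I := by
      simp [hz₂def]; ring
    rw [this, Complex.arg_real_mul I hta, Complex.arg_I]
  have harg1 : 0 ≤ (1 + I / t : ℂ).arg ∧ (1 + I / t : ℂ).arg < Real.pi / 2 := by
    constructor
    · rw [Complex.arg_nonneg_iff]
      simp
      positivity
    · rw [Complex.arg_lt_pi_div_two_iff]
      left
      simp
  have hlog : Complex.log z₁ = Complex.log (1 + I / t) + Complex.log z₂ := by
    rw [hz₁eq]
    rw [(Complex.log_mul_eq_add_log_iff hne hz₂).mpr]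
    rw [hargz₂]
    constructor
    · have := Real.pi_pos; linarith [harg1.1]
    · have := harg1.2; linarith
  -- integral part
  have hint : ∀ z : ℂ, IntervalIntegrable
      (fun x : ℝ => z * ∫ y in (0:ℝ)..1, Complex.exp (-z * x * y)) volume 0 1 :=
    fun z => (aux_cont z).intervalIntegrable _ _
  have hmain : ∀ z : ℂ, z * (∫ x in (0:ℝ)..1, ∫ y in (0:ℝ)..1, Complex.exp (-z * x * y))
      = ∫ x in (0:ℝ)..1, z * ∫ y in (0:ℝ)..1, Complex.exp (-z * x * y) :=
    fun z => (intervalIntegral.integral_const_mul z _).symm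
  have hcongr : (∫ x in (0:ℝ)..1,
        ((z₁ * ∫ y in (0:ℝ)..1, Complex.exp (-z₁ * x * y))
          - z₂ * ∫ y in (0:ℝ)..1, Complex.exp (-z₂ * x * y)))
      = ∫ x in (0:ℝ)..1, Complex.exp (-z₂ * x) * ((1 - Complex.exp (a * x)) / x) := by
    apply intervalIntegral.integral_congr_ae
    filter_upwards with x hx
    rw [Set.uIoc_of_le (zero_le_one' ℝ)] at hx
    have hx0 : x ≠ 0 := hx.1.ne'
    rw [aux_P z₁ hz₁ x hx0, aux_P z₂ hz₂ x hx0]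
    have hx' : (x : ℂ) ≠ 0 := Complex.ofReal_ne_zero.mpr hx0
    have hexp : Complex.exp (-z₁ * x) = Complex.exp (-z₂ * x) * Complex.exp (a * x) := by
      rw [← Complex.exp_add]
      congr 1
      simp only [hz₁def]
      ring
    rw [hexp]
    field_simp
    ring
  have hsub := (intervalIntegral.integral_sub (hint z₁) (hint z₂)).symm.trans hcongr
  simp only [expIntegralE1, hmain, hlog]
  linear_combination hsub

lemma T1_lemma (a : ℝ) (ha : 0 < a) :
    Filter.Tendsto (fun t : ℝ => ∫ x in (0:ℝ)..1,
        Complex.exp (-(I * t * a) * x) * ((1 - Complex.exp (a * x)) / x))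
      Filter.atTop (nhds 0) := by
  set g : ℝ → ℂ := fun x => (1 - Complex.exp (a * x)) / x with hg
  set f : ℝ → ℂ := Set.indicator (Set.Ioc (0:ℝ) 1) g with hf
  have hw : Tendsto (fun t : ℝ => t * a / (2 * Real.pi)) atTop (cocompact ℝ) := by
    rw [cocompact_eq_atBot_atTop]
    refine Tendsto.mono_right ?_ le_sup_right
    exact (tendsto_id.atTop_mul_const ha).atTop_div_const (by positivity)
  have T1 := (Real.tendsto_integral_exp_smul_cocompact f).comp hw
  refine T1.congr fun t => ?_
  rw [intervalIntegral.integral_of_le zero_le_one,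
    ← MeasureTheory.integral_indicator measurableSet_Ioc]
  simp only [Function.comp_apply]
  congr 1
  funext v
  by_cases hv : v ∈ Set.Ioc (0:ℝ) 1
  · rw [hf, Set.indicator_of_mem hv, Set.indicator_of_mem hv, Circle.smul_def,
      Real.fourierChar_apply]
    congr 1
    have hπ : (2 * Real.pi) ≠ 0 := by positivity
    have hπc : (Real.pi : ℂ) ≠ 0 := Complex.ofReal_ne_zero.mpr Real.pi_ne_zero
    push_cast
    field_simp
  · rw [hf, Set.indicator_of_notMem hv, Set.indicator_of_notMem hv, smul_zero]

lemma T2_lemma :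
    Filter.Tendsto (fun t : ℝ => Complex.log (1 + I / t)) Filter.atTop (nhds 0) := by
  have hinv : Tendsto (fun t : ℝ => ((t : ℂ))⁻¹) atTop (nhds 0) := by
    have := (Complex.continuous_ofReal.tendsto 0).comp tendsto_inv_atTop_zero
    simpa [Function.comp_def] using this
  have h1 : Tendsto (fun t : ℝ => 1 + I / (t : ℂ)) atTop (nhds 1) := by
    have := tendsto_const_nhds (x := (1:ℂ)) (f := atTop (α := ℝ))
      |>.add (tendsto_const_nhds (x := I) (f := atTop (α := ℝ)) |>.mul hinv)
    simpa [div_eq_mul_inv] using this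
  have hlog := (continuousAt_clog Complex.one_mem_slitPlane).tendsto.comp h1
  simpa [Complex.log_one, Function.comp_def] using hlog

open Complex in
theorem expIntegral_contribution_vanishes (N : ℕ) (hN : 0 < N) :
    Filter.Tendsto
      (fun t : ℝ => ((N : ℂ) / ((N : ℂ) + 1)) *
        (expIntegralE1 (I * t * (Real.log ((N : ℝ) + 1) : ℂ) - (Real.log ((N : ℝ) + 1) : ℂ))
          - expIntegralE1 (I * t * (Real.log ((N : ℝ) + 1) : ℂ))))
      Filter.atTop (nhds 0) := by
  set a : ℝ := Real.log ((N : ℝ) + 1) with ha_def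
  have ha : 0 < a := Real.log_pos (by
    have : (1 : ℝ) ≤ (N : ℝ) := by exact_mod_cast hN
    linarith)
  set c : ℂ := (N : ℂ) / ((N : ℂ) + 1) with hc_def
  have hlim : Tendsto (fun t : ℝ => c *
      ((∫ x in (0:ℝ)..1, Complex.exp (-(I * t * a) * x) * ((1 - Complex.exp (a * x)) / x))
        - Complex.log (1 + I / t))) atTop (nhds 0) := by
    have := ((T1_lemma a ha).sub T2_lemma).const_mul c
    simpa using this
  refine hlim.congr' ?_
  filter_upwards [eventually_gt_atTop (0:ℝ)] with t ht
  rw [diff_formula a t ha ht]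
end

section
/- For every positive integer N, the truncated zeta function has a simple pole at s = 1 with residue N/(N+1): lim_{s→1} (s−1)·ζ_w(N; s) = N/(N+1), where s ranges over complex numbers different from 1. -/
lemma telescope_sum (N : ℕ) :
    ∑ n ∈ Finset.Icc 1 N, ((n : ℂ) * ((n : ℂ) + 1)⁻¹ - 1 + (n : ℂ)⁻¹)
      = (N : ℂ) / ((N : ℂ) + 1) := by
  induction N with
  | zero => simp
  | succ N ih =>
    rw [Finset.sum_Icc_succ_top (by omega : 1 ≤ N + 1), ih]
    have h1 : (N : ℂ) + 1 ≠ 0 := Nat.cast_add_one_ne_zero N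
    have h2 : (N : ℂ) + 1 + 1 ≠ 0 := by
      have := Nat.cast_add_one_ne_zero (R := ℂ) (N + 1)
      push_cast at this
      exact this
    push_cast
    field_simp
    ring

theorem zetaW_residue_at_one (N : ℕ) (hN : 0 < N) :
    Filter.Tendsto (fun s : ℂ => (s - 1) * zetaW N s)
      (nhdsWithin 1 {(1 : ℂ)}ᶜ) (nhds ((N : ℂ) / ((N : ℂ) + 1))) := by
  set F : ℂ → ℂ := fun s => ∑ n ∈ Finset.Icc 1 N,
      ((n : ℂ) * ((n : ℂ) + 1) ^ (-s) - (n : ℂ) ^ ((1 : ℂ) - s) + s * (n : ℂ) ^ (-s))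
    with hFdef
  have hcont : Continuous F := by
    apply continuous_finset_sum
    intro n hn
    have hn1 : 1 ≤ n := (Finset.mem_Icc.mp hn).1
    have hne : (n : ℂ) ≠ 0 := Nat.cast_ne_zero.mpr (by omega)
    have hne1 : (n : ℂ) + 1 ≠ 0 := by
      have := Nat.cast_add_one_ne_zero (R := ℂ) n
      push_cast at this
      exact this
    exact ((continuous_const.mul (continuous_neg.const_cpow (Or.inl hne1))).sub
      ((continuous_const.sub continuous_id).const_cpow (Or.inl hne))).add
      (continuous_id.mul (continuous_neg.const_cpow (Or.inl hne)))
  have hval : F 1 = (N : ℂ) / ((N : ℂ) + 1) := by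
    rw [hFdef, ← telescope_sum N]
    apply Finset.sum_congr rfl
    intro n hn
    simp [Complex.cpow_neg_one, sub_self, Complex.cpow_zero]
  have hF : Filter.Tendsto F (nhds 1) (nhds ((N : ℂ) / ((N : ℂ) + 1))) := by
    rw [← hval]; exact hcont.tendsto 1
  have key : ∀ s : ℂ, s ≠ 1 → (s - 1) * zetaW N s = F s := by
    intro s hs
    have h : s - 1 ≠ 0 := sub_ne_zero.mpr hs
    rw [zetaW, hFdef]
    field_simp
  refine (hF.mono_left nhdsWithin_le_nhds).congr' ?_
  filter_upwards [self_mem_nhdsWithin] with s hs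
  exact (key s hs).symm
end

section
/- For every positive integer N, the derivative of the truncated zeta function at s = 0 equals a(N) − N, where a(N) = Σ_{n=1}^N n·(ln(n+1) − ln(n)); that is, d/ds ζ_w(N; s) |_{s=0} = Σ_{n=1}^N n·(ln(n+1) − ln(n)) − N. -/
theorem deriv_zetaW_at_zero (N : ℕ) (hN : 0 < N) :
    deriv (zetaW N) 0 =
      ((∑ n ∈ Finset.Icc 1 N,
          (n : ℝ) * (Real.log ((n : ℝ) + 1) - Real.log (n : ℝ)) : ℝ) : ℂ) - (N : ℂ) := by
  have hterm : ∀ n ∈ Finset.Icc 1 N,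
      HasDerivAt (fun s : ℂ =>
          (n : ℂ) * ((n : ℂ) + 1) ^ (-s) - (n : ℂ) ^ ((1 : ℂ) - s) + s * (n : ℂ) ^ (-s))
        ((n : ℂ) * (((n : ℂ) + 1) ^ (-(0:ℂ)) * Complex.log ((n : ℂ) + 1) * (-1))
          - (n : ℂ) ^ ((1:ℂ) - 0) * Complex.log (n : ℂ) * (-1)
          + (1 * (n : ℂ) ^ (-(0:ℂ)) + (0:ℂ) * ((n : ℂ) ^ (-(0:ℂ)) * Complex.log (n : ℂ) * (-1)))) 0 := by
    intro n hn
    have hn1 : 1 ≤ n := (Finset.mem_Icc.mp hn).1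
    have hne : (n : ℂ) ≠ 0 := Nat.cast_ne_zero.mpr (by omega)
    have hne1 : ((n : ℂ) + 1) ≠ 0 := by
      have : ((n + 1 : ℕ) : ℂ) ≠ 0 := Nat.cast_ne_zero.mpr (by omega)
      simpa using this
    have h1 : HasDerivAt (fun s : ℂ => ((n : ℂ) + 1) ^ (-s))
        (((n : ℂ) + 1) ^ (-(0:ℂ)) * Complex.log ((n : ℂ) + 1) * (-1)) 0 :=
      (hasDerivAt_neg (0:ℂ)).const_cpow (Or.inl hne1)
    have h2 : HasDerivAt (fun s : ℂ => (n : ℂ) ^ ((1:ℂ) - s))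
        ((n : ℂ) ^ ((1:ℂ) - 0) * Complex.log (n : ℂ) * (-1)) 0 := by
      have := ((hasDerivAt_id (0:ℂ)).const_sub 1).const_cpow (c := (n:ℂ)) (Or.inl hne)
      simpa using this
    have h3 : HasDerivAt (fun s : ℂ => (n : ℂ) ^ (-s))
        ((n : ℂ) ^ (-(0:ℂ)) * Complex.log (n : ℂ) * (-1)) 0 :=
      (hasDerivAt_neg (0:ℂ)).const_cpow (Or.inl hne)
    have h4 : HasDerivAt (fun s : ℂ => s * (n : ℂ) ^ (-s))
        (1 * (n : ℂ) ^ (-(0:ℂ)) + (0:ℂ) * ((n : ℂ) ^ (-(0:ℂ)) * Complex.log (n : ℂ) * (-1))) 0 := by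
      simpa using (hasDerivAt_id (0:ℂ)).fun_mul h3
    exact ((h1.const_mul _).sub h2).add h4
  have hsum : HasDerivAt (fun s : ℂ => ∑ n ∈ Finset.Icc 1 N,
        ((n : ℂ) * ((n : ℂ) + 1) ^ (-s) - (n : ℂ) ^ ((1 : ℂ) - s) + s * (n : ℂ) ^ (-s)))
      (∑ n ∈ Finset.Icc 1 N,
        ((n : ℂ) * (((n : ℂ) + 1) ^ (-(0:ℂ)) * Complex.log ((n : ℂ) + 1) * (-1))
          - (n : ℂ) ^ ((1:ℂ) - 0) * Complex.log (n : ℂ) * (-1)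
          + (1 * (n : ℂ) ^ (-(0:ℂ)) + (0:ℂ) * ((n : ℂ) ^ (-(0:ℂ)) * Complex.log (n : ℂ) * (-1))))) 0 :=
    HasDerivAt.fun_sum hterm
  have hq : HasDerivAt (fun s : ℂ => 1 / (s - 1)) (-1 / ((0:ℂ) - 1) ^ 2) 0 := by
    have := ((hasDerivAt_id (0:ℂ)).sub_const 1).fun_inv (by norm_num)
    simpa [one_div] using this
  have hD := hq.fun_mul hsum
  have hzeta : zetaW N = fun s : ℂ => (1 / (s - 1)) * ∑ n ∈ Finset.Icc 1 N,
      ((n : ℂ) * ((n : ℂ) + 1) ^ (-s) - (n : ℂ) ^ ((1 : ℂ) - s) + s * (n : ℂ) ^ (-s)) := rfl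
  rw [hzeta, hD.deriv]
  have hS0 : (∑ n ∈ Finset.Icc 1 N,
      ((n : ℂ) * ((n : ℂ) + 1) ^ (-(0:ℂ)) - (n : ℂ) ^ ((1 : ℂ) - 0) + 0 * (n : ℂ) ^ (-(0:ℂ)))) = 0 := by
    apply Finset.sum_eq_zero
    intro n hn
    simp [Complex.cpow_zero, Complex.cpow_one]
  simp only [hS0, mul_zero, zero_add]
  have hzero : ((0:ℂ) - 1) = -1 := by ring
  have hcard : (N:ℂ) = ∑ _n ∈ Finset.Icc 1 N, (1:ℂ) := by
    simp [Nat.card_Icc]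
  rw [Complex.ofReal_sum, Finset.mul_sum, hcard, ← Finset.sum_sub_distrib]
  apply Finset.sum_congr rfl
  intro n hn
  have h0 : (0:ℝ) ≤ (n:ℝ) := Nat.cast_nonneg n
  have h1 : (0:ℝ) ≤ (n:ℝ) + 1 := by positivity
  have e2 : Complex.log ((n:ℕ):ℂ) = (Real.log (n:ℝ) : ℂ) := by
    rw [← Complex.ofReal_natCast, ← Complex.ofReal_log h0]
  have e1 : Complex.log (((n:ℕ):ℂ) + 1) = (Real.log ((n:ℝ)+1) : ℂ) := by
    rw [show ((n:ℂ) + 1) = (((n:ℝ) + 1 : ℝ) : ℂ) by push_cast; ring, ← Complex.ofReal_log h1]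
  simp only [neg_zero, sub_zero, Complex.cpow_zero, Complex.cpow_one, e1, e2]
  push_cast
  ring
end

section
/- For every positive integer N, the reflection function tends to 0 both at s = 1 and at s = 2: lim_{s→1} χ(N; s) = 0 and lim_{s→2} χ(N; s) = 0, where s ranges over complex numbers at which χ(N; s) is defined. -/
/-- The reflection function `χ(N; s) = ζ_w(N; 1-s) / ζ_w(N; s)`. -/
noncomputable def chiW (N : ℕ) (s : ℂ) : ℂ := zetaW N (1 - s) / zetaW N s

/-- The sum part of `zetaW`. -/
noncomputable def Sw (N : ℕ) (s : ℂ) : ℂ :=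
  ∑ n ∈ Finset.Icc 1 N,
    ((n : ℂ) * ((n : ℂ) + 1) ^ (-s) - (n : ℂ) ^ ((1 : ℂ) - s) + s * (n : ℂ) ^ (-s))

lemma zetaW_eq_s14 (N : ℕ) (s : ℂ) : zetaW N s = (1 / (s - 1)) * Sw N s := rfl

lemma contSw (N : ℕ) : Continuous (Sw N) := by
  unfold Sw
  apply continuous_finset_sum
  intro n hn
  have hn1 : 1 ≤ n := (Finset.mem_Icc.mp hn).1
  have h0 : (n : ℂ) ≠ 0 := Nat.cast_ne_zero.mpr (by omega)
  have h1 : (n : ℂ) + 1 ≠ 0 := by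
    have h : ((n + 1 : ℕ) : ℂ) ≠ 0 := Nat.cast_ne_zero.mpr (by omega)
    push_cast at h; exact h
  exact ((continuous_const.mul (continuous_neg.const_cpow (Or.inl h1))).sub
      ((continuous_const.sub continuous_id).const_cpow (Or.inl h0))).add
    (continuous_id.mul (continuous_neg.const_cpow (Or.inl h0)))

lemma Sw_one (N : ℕ) (hN : 0 < N) : Sw N 1 ≠ 0 := by
  have hS : Sw N 1 = ((∑ n ∈ Finset.Icc 1 N, (1 : ℝ) / (n * (n + 1)) : ℝ) : ℂ) := by
    unfold Sw
    push_cast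
    apply Finset.sum_congr rfl
    intro n hn
    have hn1 : 1 ≤ n := (Finset.mem_Icc.mp hn).1
    have h0 : (n : ℂ) ≠ 0 := Nat.cast_ne_zero.mpr (by omega)
    have h1 : (n : ℂ) + 1 ≠ 0 := by
      have h : ((n + 1 : ℕ) : ℂ) ≠ 0 := Nat.cast_ne_zero.mpr (by omega)
      push_cast at h; exact h
    rw [show ((1:ℂ) - 1) = 0 by ring, Complex.cpow_zero,
      show (-(1:ℂ)) = ((-1 : ℤ) : ℂ) by norm_num, Complex.cpow_intCast, Complex.cpow_intCast]
    simp only [zpow_neg, zpow_one]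
    field_simp
    ring
  rw [hS]
  have hpos : (0 : ℝ) < ∑ n ∈ Finset.Icc 1 N, (1 : ℝ) / (n * (n + 1)) := by
    apply Finset.sum_pos
    · intro n hn
      have hn1 : 1 ≤ n := (Finset.mem_Icc.mp hn).1
      have : (0:ℝ) < n := by exact_mod_cast hn1
      positivity
    · exact ⟨1, Finset.mem_Icc.mpr ⟨le_refl 1, hN⟩⟩
  exact_mod_cast hpos.ne'

lemma Sw_two (N : ℕ) (hN : 0 < N) : Sw N 2 ≠ 0 := by
  have hS : Sw N 2 = ((∑ n ∈ Finset.Icc 1 N, ((3 * n + 2) / (n ^ 2 * (n + 1) ^ 2)) : ℝ) : ℂ) := by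
    unfold Sw
    push_cast
    apply Finset.sum_congr rfl
    intro n hn
    have hn1 : 1 ≤ n := (Finset.mem_Icc.mp hn).1
    have h0 : (n : ℂ) ≠ 0 := Nat.cast_ne_zero.mpr (by omega)
    have h1 : (n : ℂ) + 1 ≠ 0 := by
      have h : ((n + 1 : ℕ) : ℂ) ≠ 0 := Nat.cast_ne_zero.mpr (by omega)
      push_cast at h; exact h
    rw [show ((1:ℂ) - 2) = ((-1 : ℤ) : ℂ) by norm_num,
      show (-(2:ℂ)) = ((-2 : ℤ) : ℂ) by norm_num,
      Complex.cpow_intCast, Complex.cpow_intCast, Complex.cpow_intCast]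
    simp only [zpow_neg, zpow_one, zpow_two]
    field_simp
    ring
  rw [hS]
  have hpos : (0 : ℝ) < ∑ n ∈ Finset.Icc 1 N, ((3 * n + 2) / (n ^ 2 * (n + 1) ^ 2) : ℝ) := by
    apply Finset.sum_pos
    · intro n hn
      have hn1 : 1 ≤ n := (Finset.mem_Icc.mp hn).1
      have : (0:ℝ) < n := by exact_mod_cast hn1
      positivity
    · exact ⟨1, Finset.mem_Icc.mpr ⟨le_refl 1, hN⟩⟩
  exact_mod_cast hpos.ne'

lemma Sw_negOne (N : ℕ) : Sw N (-1) = 0 := by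
  unfold Sw
  apply Finset.sum_eq_zero
  intro n hn
  simp only [neg_neg, Complex.cpow_one,
    show ((1:ℂ) - (-1)) = ((2:ℕ):ℂ) by norm_num, Complex.cpow_natCast]
  ring

theorem chiW_tendsto_zero_at_one_and_two (N : ℕ) (hN : 0 < N) :
    Filter.Tendsto (chiW N)
        (nhdsWithin 1 {s : ℂ | s ≠ 0 ∧ s ≠ 1 ∧ zetaW N s ≠ 0}) (nhds 0) ∧
      Filter.Tendsto (chiW N)
        (nhdsWithin 2 {s : ℂ | s ≠ 0 ∧ s ≠ 1 ∧ zetaW N s ≠ 0}) (nhds 0) := by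
  constructor
  · -- at 1
    set F : ℂ → ℂ := fun s => (Sw N (1 - s) * (s - 1)) / ((-s) * Sw N s) with hF
    have hcont : Filter.Tendsto F (nhds 1) (nhds 0) := by
      have hc : ContinuousAt F 1 := by
        apply ContinuousAt.div
        · exact (((contSw N).comp (by fun_prop)).mul (by fun_prop)).continuousAt
        · exact ((continuous_neg.mul (contSw N))).continuousAt
        · simp only [neg_one_mul]
          exact neg_ne_zero.mpr (Sw_one N hN)
      have hval : F 1 = 0 := by simp [hF]
      simpa [hval] using hc.tendsto
    have heq : chiW N =ᶠ[nhdsWithin 1 {s : ℂ | s ≠ 0 ∧ s ≠ 1 ∧ zetaW N s ≠ 0}] F := by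
      filter_upwards [self_mem_nhdsWithin] with s hs
      obtain ⟨hs0, hs1, hsz⟩ := hs
      have hSne : Sw N s ≠ 0 := by
        intro h
        exact hsz (by rw [zetaW_eq_s14, h, mul_zero])
      have hs1' : s - 1 ≠ 0 := sub_ne_zero.mpr hs1
      rw [chiW, zetaW_eq_s14, zetaW_eq_s14, hF]
      rw [show (1 : ℂ) - s - 1 = -s by ring]
      field_simp
    exact (hcont.mono_left nhdsWithin_le_nhds).congr' heq.symm
  · -- at 2
    have hz2 : zetaW N 2 ≠ 0 := by
      rw [zetaW_eq_s14]
      simp only [show (2:ℂ) - 1 = 1 by norm_num, one_div, inv_one, one_mul]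
      exact Sw_two N hN
    have hcA : ContinuousAt (zetaW N) 2 := by
      apply ContinuousAt.mul
      · exact ContinuousAt.div continuousAt_const (by fun_prop) (by norm_num)
      · exact (contSw N).continuousAt
    have hneg : ContinuousAt (zetaW N) (-1) := by
      apply ContinuousAt.mul
      · exact ContinuousAt.div continuousAt_const (by fun_prop) (by norm_num)
      · exact (contSw N).continuousAt
    have hcB : ContinuousAt (fun s => zetaW N (1 - s)) 2 := by
      have h12 : (1:ℂ) - 2 = -1 := by norm_num
      exact ContinuousAt.comp (h12 ▸ hneg) (by fun_prop)
    have hc : ContinuousAt (chiW N) 2 := hcB.div hcA hz2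
    have hval : chiW N 2 = 0 := by
      rw [chiW, show (1:ℂ) - 2 = -1 by norm_num, zetaW_eq_s14, Sw_negOne, mul_zero, zero_div]
    have h := hc.tendsto
    rw [hval] at h
    exact h.mono_left nhdsWithin_le_nhds
end

section
/- For every positive integer N, the residue at s = 2 of the reciprocal reflection function χ(N; s)^{−1} = ζ_w(N; s)/ζ_w(N; 1−s) is given by lim_{s→2} (s−2)·ζ_w(N; s)/ζ_w(N; 1−s) = ( 2N/(N+1)² − 2·Σ_{k=N+1}^∞ k^{−2} + 2·ζ(2) ) / ( (N+1)²/2 − N/2 − 1/2 − Σ_{n=1}^N n·(n+1)·(ln(n+1) − ln(n)) ). -/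
open Finset Filter Complex

namespace ResidueAux

/-- The sum part of `zetaW`. -/
noncomputable def S (N : ℕ) (s : ℂ) : ℂ :=
  ∑ n ∈ Finset.Icc 1 N,
    ((n : ℂ) * ((n : ℂ) + 1) ^ (-s) - (n : ℂ) ^ ((1 : ℂ) - s) + s * (n : ℂ) ^ (-s))

/-- Derivative of the sum part. -/
noncomputable def S' (N : ℕ) (s : ℂ) : ℂ :=
  ∑ n ∈ Finset.Icc 1 N,
    ((n : ℂ) * (((n : ℂ) + 1) ^ (-s) * Complex.log ((n : ℂ) + 1) * (-1))
      - (n : ℂ) ^ ((1 : ℂ) - s) * Complex.log (n : ℂ) * (-1)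
      + (1 * (n : ℂ) ^ (-s) + s * ((n : ℂ) ^ (-s) * Complex.log (n : ℂ) * (-1))))

lemma hasDerivAt_S (N : ℕ) (s : ℂ) : HasDerivAt (S N) (S' N s) s := by
  apply HasDerivAt.fun_sum
  intro n hn
  have hn1 : 1 ≤ n := (Finset.mem_Icc.mp hn).1
  have hnc : (n : ℂ) ≠ 0 := by
    exact_mod_cast Nat.cast_ne_zero.mpr (by omega)
  have hnc1 : (n : ℂ) + 1 ≠ 0 := by
    have : ((n + 1 : ℕ) : ℂ) ≠ 0 := Nat.cast_ne_zero.mpr (by omega)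
    push_cast at this; exact this
  have h1 : HasDerivAt (fun s : ℂ => ((n : ℂ) + 1) ^ (-s))
      (((n : ℂ) + 1) ^ (-s) * Complex.log ((n : ℂ) + 1) * (-1)) s :=
    (hasDerivAt_neg' s).const_cpow (Or.inl hnc1)
  have h2 : HasDerivAt (fun s : ℂ => (n : ℂ) ^ ((1 : ℂ) - s))
      ((n : ℂ) ^ ((1 : ℂ) - s) * Complex.log (n : ℂ) * (-1)) s := by
    have : HasDerivAt (fun s : ℂ => (1 : ℂ) - s) (-1) s := (hasDerivAt_id s).const_sub 1
    exact this.const_cpow (Or.inl hnc)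
  have h3 : HasDerivAt (fun s : ℂ => (n : ℂ) ^ (-s))
      ((n : ℂ) ^ (-s) * Complex.log (n : ℂ) * (-1)) s :=
    (hasDerivAt_neg' s).const_cpow (Or.inl hnc)
  exact ((h1.const_mul ((n : ℂ))).sub h2).add ((hasDerivAt_id s).mul h3)

lemma S_neg_one (N : ℕ) : S N (-1) = 0 := by
  apply Finset.sum_eq_zero
  intro n hn
  have h2 : ((1 : ℂ) - (-1)) = ((2 : ℕ) : ℂ) := by norm_num
  simp only [neg_neg, h2, Complex.cpow_one, Complex.cpow_natCast]
  ring

lemma gauss (N : ℕ) : (∑ n ∈ Finset.Icc 1 N, (n : ℂ)) * 2 = (N : ℂ) * ((N : ℂ) + 1) := by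
  induction N with
  | zero => simp
  | succ n ih =>
    rw [Finset.sum_Icc_succ_top (by omega)]
    push_cast
    push_cast at ih
    ring_nf
    ring_nf at ih
    linear_combination ih

lemma S'_neg_one (N : ℕ) :
    S' N (-1) = ((N : ℂ) + 1) ^ 2 / 2 - (N : ℂ) / 2 - 1 / 2
      - ∑ n ∈ Finset.Icc 1 N,
          (n : ℂ) * ((n : ℂ) + 1) *
            ((Real.log ((n : ℝ) + 1) : ℂ) - (Real.log (n : ℝ) : ℂ)) := by
  have key : S' N (-1) = ∑ n ∈ Finset.Icc 1 N,
      ((n : ℂ) - (n : ℂ) * ((n : ℂ) + 1) *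
        ((Real.log ((n : ℝ) + 1) : ℂ) - (Real.log (n : ℝ) : ℂ))) := by
    apply Finset.sum_congr rfl
    intro n hn
    have hl2 : Complex.log ((n : ℂ)) = ((Real.log ((n : ℝ)) : ℝ) : ℂ) :=
      Complex.natCast_log.symm
    have hl1 : Complex.log ((n : ℂ) + 1) = ((Real.log ((n : ℝ) + 1) : ℝ) : ℂ) := by
      have e1 : ((n : ℂ) + 1) = (((n + 1 : ℕ) : ℕ) : ℂ) := by push_cast; ring
      have e2 : ((n : ℝ) + 1) = (((n + 1 : ℕ) : ℕ) : ℝ) := by push_cast; ring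
      rw [e1, e2, ← Complex.natCast_log]
    have h2 : ((1 : ℂ) - (-1)) = ((2 : ℕ) : ℂ) := by norm_num
    simp only [neg_neg, h2, Complex.cpow_one, Complex.cpow_natCast, hl1, hl2]
    ring
  rw [key, Finset.sum_sub_distrib]
  have := gauss N
  have h : (∑ n ∈ Finset.Icc 1 N, (n : ℂ)) = (N : ℂ) * ((N : ℂ) + 1) / 2 := by
    rw [eq_div_iff (two_ne_zero)]
    exact this
  rw [h]
  ring

lemma sum_term2 (N : ℕ) :
    (∑ n ∈ Finset.Icc 1 N,
        ((n : ℂ) * (((n : ℂ) + 1) ^ 2)⁻¹ - ((n : ℂ))⁻¹ + 2 * (((n : ℂ)) ^ 2)⁻¹))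
      = (N : ℂ) / ((N : ℂ) + 1) ^ 2 + ∑ n ∈ Finset.Icc 1 N, (((n : ℂ)) ^ 2)⁻¹ := by
  induction N with
  | zero => simp
  | succ m ih =>
    rw [Finset.sum_Icc_succ_top (by omega : 1 ≤ m + 1),
        Finset.sum_Icc_succ_top (by omega : 1 ≤ m + 1), ih]
    have h1 : ((m : ℂ) + 1) ≠ 0 := by
      have : (((m + 1 : ℕ)) : ℂ) ≠ 0 := Nat.cast_ne_zero.mpr (by omega)
      push_cast at this; exact this
    have h2 : ((m : ℂ) + 2) ≠ 0 := by
      have : (((m + 2 : ℕ)) : ℂ) ≠ 0 := Nat.cast_ne_zero.mpr (by omega)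
      push_cast at this; exact this
    push_cast
    field_simp
    ring

lemma S_two (N : ℕ) :
    S N 2 = (N : ℂ) / ((N : ℂ) + 1) ^ 2 + ∑ n ∈ Finset.Icc 1 N, (((n : ℂ)) ^ 2)⁻¹ := by
  have key : S N 2 = ∑ n ∈ Finset.Icc 1 N,
      ((n : ℂ) * (((n : ℂ) + 1) ^ 2)⁻¹ - ((n : ℂ))⁻¹ + 2 * (((n : ℂ)) ^ 2)⁻¹) := by
    apply Finset.sum_congr rfl
    intro n hn
    have e1 : (-(2 : ℂ)) = -(((2 : ℕ) : ℂ)) := by norm_num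
    have e2 : ((1 : ℂ) - 2) = -1 := by norm_num
    simp only [e1, e2, Complex.cpow_neg, Complex.cpow_natCast, Complex.cpow_one]
  rw [key, sum_term2]

lemma summable_aux : Summable (fun n : ℕ => 1 / ((n : ℂ)) ^ 2) := by
  apply Summable.of_norm
  have : Summable (fun n : ℕ => 1 / ((n : ℝ)) ^ 2) := Real.summable_one_div_nat_pow.mpr one_lt_two
  refine this.congr fun n => ?_
  simp [norm_div, norm_pow]

lemma tsum_aux (N : ℕ) :
    (∑' k : ℕ, 1 / ((k : ℂ) + (N : ℂ) + 1) ^ 2)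
      = riemannZeta 2 - ∑ n ∈ Finset.Icc 1 N, (((n : ℂ)) ^ 2)⁻¹ := by
  have hz : riemannZeta 2 = ∑' n : ℕ, 1 / ((n : ℂ)) ^ 2 := by
    have := zeta_nat_eq_tsum_of_gt_one (k := 2) one_lt_two
    norm_num at this
    rw [this]
    apply tsum_congr; intro n; rw [one_div]
  have hsplit := Summable.sum_add_tsum_nat_add (f := fun n : ℕ => 1 / ((n : ℂ)) ^ 2) (N + 1) summable_aux
  have h1 : (∑ i ∈ Finset.range (N + 1), 1 / ((i : ℂ)) ^ 2)
      = ∑ n ∈ Finset.Icc 1 N, (((n : ℂ)) ^ 2)⁻¹ := by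
    rw [Finset.sum_range_succ']
    simp only [Nat.cast_zero]
    rw [show (1 : ℂ) / (0 : ℂ) ^ 2 = 0 by norm_num, add_zero]
    rw [show Finset.Icc 1 N = Finset.Ico 1 (N + 1) from (Finset.Ico_add_one_right_eq_Icc 1 N).symm,
        Finset.sum_Ico_eq_sum_range]
    simp only [Nat.add_sub_cancel]
    apply Finset.sum_congr rfl
    intro i hi
    push_cast
    rw [one_div, add_comm]
  have h2 : (∑' (i : ℕ), 1 / (((i + (N + 1) : ℕ)) : ℂ) ^ 2)
      = ∑' k : ℕ, 1 / ((k : ℂ) + (N : ℂ) + 1) ^ 2 := by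
    apply tsum_congr
    intro k
    push_cast
    ring_nf
  rw [hz, ← hsplit, h1, h2]
  ring

lemma gaussR (N : ℕ) : (∑ n ∈ Finset.Icc 1 N, (n : ℝ)) * 2 = (N : ℝ) * ((N : ℝ) + 1) := by
  induction N with
  | zero => simp
  | succ n ih =>
    rw [Finset.sum_Icc_succ_top (by omega)]
    push_cast
    push_cast at ih
    linear_combination ih

lemma term_lt (n : ℕ) (hn : 1 ≤ n) :
    (n : ℝ) < (n : ℝ) * ((n : ℝ) + 1) * (Real.log ((n : ℝ) + 1) - Real.log (n : ℝ)) := by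
  have hn0 : (0 : ℝ) < (n : ℝ) := by exact_mod_cast hn
  have hn1 : (0 : ℝ) < (n : ℝ) + 1 := by linarith
  have hx : Real.log ((n : ℝ) / ((n : ℝ) + 1)) < (n : ℝ) / ((n : ℝ) + 1) - 1 := by
    apply Real.log_lt_sub_one_of_pos (by positivity)
    intro h
    rw [div_eq_one_iff_eq hn1.ne'] at h
    linarith
  rw [Real.log_div hn0.ne' hn1.ne'] at hx
  have hfrac : (n : ℝ) / ((n : ℝ) + 1) - 1 = -(1 / ((n : ℝ) + 1)) := by field_simp; ring
  rw [hfrac] at hx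
  have hL : 1 / ((n : ℝ) + 1) < Real.log ((n : ℝ) + 1) - Real.log (n : ℝ) := by linarith
  have hpos : (0 : ℝ) < (n : ℝ) * ((n : ℝ) + 1) := by positivity
  have hmul := mul_lt_mul_of_pos_left hL hpos
  have hval : (n : ℝ) * ((n : ℝ) + 1) * (1 / ((n : ℝ) + 1)) = (n : ℝ) := by field_simp
  linarith [hmul, hval.ge, hval.le]

lemma Dr_neg (N : ℕ) (hN : 0 < N) :
    ((N : ℝ) + 1) ^ 2 / 2 - (N : ℝ) / 2 - 1 / 2
      - (∑ n ∈ Finset.Icc 1 N,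
          (n : ℝ) * ((n : ℝ) + 1) * (Real.log ((n : ℝ) + 1) - Real.log (n : ℝ))) < 0 := by
  have hg : ((N : ℝ) + 1) ^ 2 / 2 - (N : ℝ) / 2 - 1 / 2 = ∑ n ∈ Finset.Icc 1 N, (n : ℝ) := by
    have := gaussR N
    nlinarith [this]
  rw [hg, sub_neg]
  apply Finset.sum_lt_sum_of_nonempty
  · exact ⟨1, Finset.mem_Icc.mpr ⟨le_refl 1, hN⟩⟩
  · intro n hn
    exact term_lt n (Finset.mem_Icc.mp hn).1

lemma Dc_eq (N : ℕ) :
    (((N : ℂ) + 1) ^ 2 / 2 - (N : ℂ) / 2 - 1 / 2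
      - ∑ n ∈ Finset.Icc 1 N,
          (n : ℂ) * ((n : ℂ) + 1) *
            ((Real.log ((n : ℝ) + 1) : ℂ) - (Real.log (n : ℝ) : ℂ)))
    = ((((N : ℝ) + 1) ^ 2 / 2 - (N : ℝ) / 2 - 1 / 2
      - (∑ n ∈ Finset.Icc 1 N,
          (n : ℝ) * ((n : ℝ) + 1) * (Real.log ((n : ℝ) + 1) - Real.log (n : ℝ))) : ℝ) : ℂ) := by
  push_cast
  ring

lemma Dc_ne (N : ℕ) (hN : 0 < N) :
    (((N : ℂ) + 1) ^ 2 / 2 - (N : ℂ) / 2 - 1 / 2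
      - ∑ n ∈ Finset.Icc 1 N,
          (n : ℂ) * ((n : ℂ) + 1) *
            ((Real.log ((n : ℝ) + 1) : ℂ) - (Real.log (n : ℝ) : ℂ))) ≠ 0 := by
  rw [Dc_eq]
  exact_mod_cast (Dr_neg N hN).ne

set_option maxHeartbeats 1600000 in
lemma hasDerivAt_main (N : ℕ) :
    HasDerivAt (fun s : ℂ => zetaW N (1 - s)) (S' N (-1) / 2) 2 := by
  have hu : HasDerivAt (fun s : ℂ => (1 : ℂ) - s) (-1) 2 := (hasDerivAt_id 2).const_sub 1
  have hA : HasDerivAt (fun s : ℂ => S N (1 - s)) (S' N (-1) * -1) 2 := by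
    have h := hasDerivAt_S N (1 - 2)
    have h2 : S' N (1 - 2) = S' N (-1) := by norm_num
    rw [h2] at h
    exact h.comp 2 hu
  have hc : HasDerivAt (fun s : ℂ => (1 - s) - 1) (-1) 2 := hu.sub_const 1
  have hB : HasDerivAt (fun s : ℂ => 1 / ((1 - s) - 1))
      ((0 * ((1 - (2 : ℂ)) - 1) - 1 * (-1)) / ((1 - (2 : ℂ)) - 1) ^ 2) 2 :=
    (hasDerivAt_const 2 (1 : ℂ)).div hc (by norm_num)
  have hBA := hB.mul hA
  have hval : (0 * ((1 - (2 : ℂ)) - 1) - 1 * (-1)) / ((1 - (2 : ℂ)) - 1) ^ 2 * S N (1 - 2)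
      + 1 / ((1 - (2:ℂ)) - 1) * (S' N (-1) * -1) = S' N (-1) / 2 := by
    rw [show (1 : ℂ) - 2 = -1 by norm_num, S_neg_one]
    ring
  rw [hval] at hBA
  exact hBA

lemma continuousAt_zetaW (N : ℕ) : ContinuousAt (zetaW N) 2 := by
  have h1 : ContinuousAt (fun s : ℂ => 1 / (s - 1)) 2 := by
    apply ContinuousAt.div continuousAt_const (by fun_prop)
    norm_num
  have h2 : ContinuousAt (S N) 2 := (hasDerivAt_S N 2).continuousAt
  exact h1.mul h2

end ResidueAux

theorem residue_chiW_inv_at_two (N : ℕ) (hN : 0 < N) :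
    Filter.Tendsto (fun s : ℂ => (s - 2) * zetaW N s / zetaW N (1 - s))
      (nhdsWithin 2 {(2 : ℂ)}ᶜ)
      (nhds ((2 * (N : ℂ) / ((N : ℂ) + 1) ^ 2
            - 2 * ∑' k : ℕ, 1 / ((k : ℂ) + (N : ℂ) + 1) ^ 2
            + 2 * riemannZeta 2) /
          (((N : ℂ) + 1) ^ 2 / 2 - (N : ℂ) / 2 - 1 / 2
            - ∑ n ∈ Finset.Icc 1 N,
                (n : ℂ) * ((n : ℂ) + 1) *
                  ((Real.log ((n : ℝ) + 1) : ℂ) - (Real.log (n : ℝ) : ℂ))))) := by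
  have hD := ResidueAux.hasDerivAt_main N
  have hDc := ResidueAux.Dc_ne N hN
  have hne : ResidueAux.S' N (-1) ≠ 0 := by rw [ResidueAux.S'_neg_one]; exact hDc
  have hne2 : ResidueAux.S' N (-1) / 2 ≠ 0 := div_ne_zero hne two_ne_zero
  have hslope := hasDerivAt_iff_tendsto_slope.mp hD
  have hinv := hslope.inv₀ hne2
  have hz : Filter.Tendsto (zetaW N) (nhdsWithin 2 {(2 : ℂ)}ᶜ) (nhds (zetaW N 2)) :=
    (ResidueAux.continuousAt_zetaW N).continuousWithinAt
  have hmul := hz.mul hinv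
  have hzero : zetaW N (1 - 2) = 0 := by
    have h1 : zetaW N (1 - 2) = (1 / ((1 : ℂ) - 2 - 1)) * ResidueAux.S N (1 - 2) := rfl
    rw [h1, show (1 : ℂ) - 2 = -1 by norm_num, ResidueAux.S_neg_one, mul_zero]
  have hone : ((N : ℂ) + 1) ≠ 0 := by
    have : (((N + 1 : ℕ)) : ℂ) ≠ 0 := Nat.cast_ne_zero.mpr (by omega)
    push_cast at this; exact this
  have hval : zetaW N 2 * (ResidueAux.S' N (-1) / 2)⁻¹
      = ((2 * (N : ℂ) / ((N : ℂ) + 1) ^ 2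
            - 2 * ∑' k : ℕ, 1 / ((k : ℂ) + (N : ℂ) + 1) ^ 2
            + 2 * riemannZeta 2) /
          (((N : ℂ) + 1) ^ 2 / 2 - (N : ℂ) / 2 - 1 / 2
            - ∑ n ∈ Finset.Icc 1 N,
                (n : ℂ) * ((n : ℂ) + 1) *
                  ((Real.log ((n : ℝ) + 1) : ℂ) - (Real.log (n : ℝ) : ℂ)))) := by
    have hz2 : zetaW N 2 = ResidueAux.S N 2 := by
      have h1 : zetaW N 2 = (1 / ((2 : ℂ) - 1)) * ResidueAux.S N 2 := rfl
      rw [h1]; norm_num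
    rw [hz2, ResidueAux.S_two, ResidueAux.tsum_aux, ← ResidueAux.S'_neg_one]
    field_simp
    ring
  have hEq : (fun s : ℂ => zetaW N s * (slope (fun s : ℂ => zetaW N (1 - s)) 2 s)⁻¹)
      =ᶠ[nhdsWithin 2 {(2 : ℂ)}ᶜ] (fun s : ℂ => (s - 2) * zetaW N s / zetaW N (1 - s)) := by
    filter_upwards [self_mem_nhdsWithin] with s hs
    simp only [slope_def_field, hzero, sub_zero]
    rw [div_eq_mul_inv, div_eq_mul_inv, mul_inv, inv_inv]
    ring
  have final := hmul.congr' hEq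
  rwa [hval] at final
end

section
/- The residue at s = 2 of the reciprocal reflection function vanishes as N → ∞: lim_{N→∞} ( 2N/(N+1)² − 2·Σ_{k=N+1}^∞ k^{−2} + 2·ζ(2) ) / ( (N+1)²/2 − N/2 − 1/2 − Σ_{n=1}^N n·(n+1)·(ln(n+1) − ln(n)) ) = 0. -/
open Filter Real Finset

private lemma quad_le_log {x : ℝ} (hx : 0 ≤ x) : x - x ^ 2 / 2 ≤ Real.log (1 + x) := by
  set f : ℝ → ℝ := fun y => Real.log (1 + y) - (y - y ^ 2 / 2) with hf
  have hd : ∀ y : ℝ, 0 ≤ y → HasDerivAt f (1 / (1 + y) - (1 - y)) y := by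
    intro y hy
    have h1 : HasDerivAt (fun y : ℝ => 1 + y) 1 y := (hasDerivAt_id y).const_add 1
    have h2 : HasDerivAt (fun y : ℝ => Real.log (1 + y)) (1 / (1 + y)) y := by
      simpa using h1.log (by positivity)
    have h3 : HasDerivAt (fun y : ℝ => y - y ^ 2 / 2) (1 - y) y := by
      have := (hasDerivAt_id y).sub ((hasDerivAt_pow 2 y).div_const 2)
      exact (by simpa using this : HasDerivAt (id - fun x : ℝ => x ^ 2 / 2) (1 - y) y)
    exact h2.sub h3
  have hmono : MonotoneOn f (Set.Ici (0 : ℝ)) := by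
    apply monotoneOn_of_deriv_nonneg (convex_Ici 0)
    · apply ContinuousOn.sub
      · apply ContinuousOn.log (by fun_prop)
        intro y hy
        have : (0:ℝ) ≤ y := hy
        positivity
      · fun_prop
    · intro y hy
      rw [interior_Ici] at hy
      exact (hd y (le_of_lt hy)).differentiableAt.differentiableWithinAt
    · intro y hy
      rw [interior_Ici] at hy
      have hy' : (0:ℝ) < y := hy
      rw [(hd y hy'.le).deriv]
      have h1 : (0:ℝ) < 1 + y := by linarith
      have : 1 - y ≤ 1 / (1 + y) := by
        rw [le_div_iff₀ h1]; nlinarith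
      linarith
  have h0 : f 0 ≤ f x := hmono (by simp [Set.mem_Ici]) hx hx
  have : f 0 = 0 := by simp [hf]
  rw [this] at h0
  simpa [hf] using h0

private lemma term_ge {n : ℕ} (hn : 1 ≤ n) :
    (n : ℝ) + 1 / 2 - 1 / (2 * n) ≤
      (n : ℝ) * ((n : ℝ) + 1) * (Real.log ((n : ℝ) + 1) - Real.log n) := by
  have hn' : (0:ℝ) < n := by exact_mod_cast hn
  have hlog : Real.log ((n : ℝ) + 1) - Real.log n = Real.log (1 + 1 / n) := by
    rw [← Real.log_div (by positivity) (ne_of_gt hn')]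
    congr 1
    field_simp
  rw [hlog]
  have h := quad_le_log (x := 1 / (n : ℝ)) (by positivity)
  have hmul : (n : ℝ) * ((n : ℝ) + 1) * (1 / n - (1 / n) ^ 2 / 2)
      = (n : ℝ) + 1 / 2 - 1 / (2 * n) := by
    field_simp
    ring
  calc (n : ℝ) + 1 / 2 - 1 / (2 * n) = (n : ℝ) * ((n : ℝ) + 1) * (1 / n - (1 / n) ^ 2 / 2) :=
        hmul.symm
    _ ≤ (n : ℝ) * ((n : ℝ) + 1) * Real.log (1 + 1 / n) := by
        apply mul_le_mul_of_nonneg_left h (by positivity)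

private lemma sum_inv_le_sqrt (N : ℕ) :
    ∑ n ∈ Finset.Icc 1 N, 1 / (2 * (n : ℝ)) ≤ Real.sqrt N := by
  induction N with
  | zero => simp
  | succ N ih =>
    rw [Finset.sum_Icc_succ_top (by omega)]
    have ha : Real.sqrt (N + 1 : ℕ) ^ 2 = (N : ℝ) + 1 := by
      rw [Real.sq_sqrt (by positivity)]; push_cast; ring
    have hb : Real.sqrt N ^ 2 = (N : ℝ) := Real.sq_sqrt (by positivity)
    have hab : Real.sqrt N ≤ Real.sqrt (N + 1 : ℕ) := by
      apply Real.sqrt_le_sqrt; push_cast; linarith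
    have ha' : Real.sqrt (N + 1 : ℕ) ≤ (N : ℝ) + 1 := by
      rw [Real.sqrt_le_iff]
      constructor
      · positivity
      · push_cast; nlinarith
    have hstep : 1 / (2 * ((N : ℝ) + 1)) ≤ Real.sqrt (N + 1 : ℕ) - Real.sqrt N := by
      rw [div_le_iff₀ (by positivity)]
      nlinarith [Real.sqrt_nonneg (N : ℝ), Real.sqrt_nonneg ((N + 1 : ℕ) : ℝ)]
    push_cast at hstep hab ⊢
    linarith

private lemma sum_id_Icc (N : ℕ) : ∑ n ∈ Finset.Icc 1 N, (n : ℝ) = N * (N + 1) / 2 := by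
  induction N with
  | zero => simp
  | succ N ih =>
    rw [Finset.sum_Icc_succ_top (by omega), ih]
    push_cast
    ring

private lemma den_le (N : ℕ) :
    ((N : ℝ) + 1) ^ 2 / 2 - (N : ℝ) / 2 - 1 / 2
        - ∑ n ∈ Finset.Icc 1 N,
            (n : ℝ) * ((n : ℝ) + 1) * (Real.log ((n : ℝ) + 1) - Real.log (n : ℝ))
      ≤ -(N : ℝ) / 2 + Real.sqrt N := by
  have h1 : ∑ n ∈ Finset.Icc 1 N, ((n : ℝ) + 1 / 2 - 1 / (2 * n))
      ≤ ∑ n ∈ Finset.Icc 1 N,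
          (n : ℝ) * ((n : ℝ) + 1) * (Real.log ((n : ℝ) + 1) - Real.log (n : ℝ)) := by
    apply Finset.sum_le_sum
    intro n hn
    exact term_ge (Finset.mem_Icc.mp hn).1
  have h2 : ∑ n ∈ Finset.Icc 1 N, ((n : ℝ) + 1 / 2 - 1 / (2 * n))
      = (N : ℝ) * (N + 1) / 2 + N / 2 - ∑ n ∈ Finset.Icc 1 N, 1 / (2 * (n : ℝ)) := by
    rw [Finset.sum_sub_distrib, Finset.sum_add_distrib, sum_id_Icc, Finset.sum_const,
      Nat.card_Icc]
    simp
    ring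
  have h3 := sum_inv_le_sqrt N
  nlinarith [h1, h2, h3]

theorem residue_chiW_inv_at_two_vanishes :
    Filter.Tendsto
      (fun N : ℕ =>
        (2 * (N : ℝ) / ((N : ℝ) + 1) ^ 2
            - 2 * ∑' k : ℕ, 1 / ((k : ℝ) + (N : ℝ) + 1) ^ 2
            + 2 * (Real.pi ^ 2 / 6)) /
          (((N : ℝ) + 1) ^ 2 / 2 - (N : ℝ) / 2 - 1 / 2
            - ∑ n ∈ Finset.Icc 1 N,
                (n : ℝ) * ((n : ℝ) + 1) * (Real.log ((n : ℝ) + 1) - Real.log (n : ℝ))))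
      Filter.atTop (nhds 0) := by
  set Num : ℕ → ℝ := fun N =>
    2 * (N : ℝ) / ((N : ℝ) + 1) ^ 2
      - 2 * ∑' k : ℕ, 1 / ((k : ℝ) + (N : ℝ) + 1) ^ 2
      + 2 * (Real.pi ^ 2 / 6) with hNum
  set Den : ℕ → ℝ := fun N =>
    ((N : ℝ) + 1) ^ 2 / 2 - (N : ℝ) / 2 - 1 / 2
      - ∑ n ∈ Finset.Icc 1 N,
          (n : ℝ) * ((n : ℝ) + 1) * (Real.log ((n : ℝ) + 1) - Real.log (n : ℝ)) with hDen
  -- Numerator tends to a finite limit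
  have hA : Tendsto (fun N : ℕ => 2 * (N : ℝ) / ((N : ℝ) + 1) ^ 2) atTop (nhds 0) := by
    apply squeeze_zero' (g := fun N : ℕ => 2 / (N : ℝ))
    · filter_upwards with N
      positivity
    · filter_upwards [eventually_ge_atTop 1] with N hN
      have hN' : (1:ℝ) ≤ N := by exact_mod_cast hN
      rw [div_le_div_iff₀ (by positivity) (by positivity)]
      nlinarith
    · exact tendsto_const_div_atTop_nhds_zero_nat 2
  have hB : Tendsto (fun N : ℕ => ∑' k : ℕ, 1 / ((k : ℝ) + (N : ℝ) + 1) ^ 2)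
      atTop (nhds 0) := by
    have h := (tendsto_sum_nat_add (fun m : ℕ => 1 / (m : ℝ) ^ 2)).comp
      (Filter.tendsto_add_atTop_nat 1)
    convert h using 2 with N
    apply tsum_congr
    intro k
    push_cast
    ring_nf
  have hNumT : Tendsto Num atTop (nhds (0 - 2 * 0 + 2 * (Real.pi ^ 2 / 6))) := by
    exact (hA.sub (hB.const_mul 2)).add tendsto_const_nhds
  -- Denominator tends to -infinity
  have hDenT : Tendsto Den atTop atBot := by
    apply Filter.tendsto_atBot_mono' atTop (f₁ := fun N : ℕ => -(N : ℝ) / 4)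
    · filter_upwards [eventually_ge_atTop 16] with N hN
      have h1 := den_le N
      have h16 : (16:ℝ) ≤ N := by exact_mod_cast hN
      have hs : Real.sqrt N ≤ (N : ℝ) / 4 := by
        rw [Real.sqrt_le_iff]
        constructor
        · positivity
        · nlinarith
      calc Den N ≤ -(N : ℝ) / 2 + Real.sqrt N := h1
        _ ≤ -(N : ℝ) / 4 := by linarith
    · have h1 : Tendsto (fun N : ℕ => -(N : ℝ)) atTop atBot :=
        tendsto_neg_atBot_iff.mpr tendsto_natCast_atTop_atTop
      exact h1.atBot_div_const (by norm_num)
  have hDenT' : Tendsto (fun N => -(Den N)) atTop atTop :=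
    Filter.tendsto_neg_atBot_atTop.comp hDenT
  have hfinal := (hNumT.neg).div_atTop hDenT'
  have heq : (fun N : ℕ => -Num N / -Den N) = fun N : ℕ => Num N / Den N := by
    funext N
    exact neg_div_neg_eq _ _
  rw [heq] at hfinal
  exact hfinal
end
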